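/- arXiv:math/0204221 — 6 statements merged into one kernel-verified Lean document; each statement's English description precedes it below -/
import Mathlib

section
/- Let 𝓑 be the mapping cone of the chain map given by multiplication by c from the Koszul complex K(x_1,…,x_n) to itself, i.e. 𝓑_j = ⋀^j R^n ⊕ ⋀^{j−1} R^n with differential β(ω,η) = (ι_x(ω) + (−1)^j c·η, ι_x(η)). Then: (i) H_k(𝓑) = 0 for all k ≥ 3; (ii) H_2(𝓑) is isomorphic as an R-module to ann_{B'}(x_n) ∩ ann_{B'}(c) (intersection of annihilators inside B'); (iii) there is a k-vector space isomorphism H_1(𝓑) ≅ ann_{B'}(x_n)/(c·ann_{B'}(x_n)) ⊕ ann_B(c); (iv) H_0(𝓑) ≅ B/(c). -/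
/-! Koszul complex model and the mapping cone of multiplication by `c`. -/

/-- Degree `j` part `⋀ʲ Rⁿ` of the Koszul complex (coefficients w.r.t. the basis
`e_S`, `S` a `j`-element subset of `Fin n`). -/
abbrev KSp (R : Type*) [CommRing R] (n j : ℕ) : Type _ :=
  {s : Finset (Fin n) // s.card = j} → R

/-- The Koszul differential: contraction with `x`. -/
noncomputable def koszulD {R : Type*} [CommRing R] {n : ℕ} (x : Fin n → R) (j : ℕ) :
    KSp R n (j + 1) →ₗ[R] KSp R n j where
  toFun ω t := ∑ i : Fin n,
    if h : i ∈ t.1 then 0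
    else (-1 : R) ^ (t.1.filter (· < i)).card * x i *
      ω ⟨insert i t.1, by rw [Finset.card_insert_of_notMem h, t.2]⟩
  map_add' ω η := funext fun t => by
    dsimp only [Pi.add_apply]
    rw [← Finset.sum_add_distrib]
    refine Finset.sum_congr rfl fun i _ => ?_
    split_ifs with h
    · simp
    · ring
  map_smul' r ω := funext fun t => by
    dsimp only [Pi.smul_apply, RingHom.id_apply, smul_eq_mul]
    rw [Finset.mul_sum]
    refine Finset.sum_congr rfl fun i _ => ?_
    split_ifs with h
    · simp
    · ring

/-- Differential `𝓑₁ = ⋀¹Rⁿ ⊕ ⋀⁰Rⁿ → 𝓑₀ = ⋀⁰Rⁿ` of the mapping cone of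
multiplication by `c` on the Koszul complex: `β(ω, η) = ι_x ω + (−1)¹ c η`. -/
noncomputable def coneD0 {R : Type*} [CommRing R] {n : ℕ} (x : Fin n → R) (c : R) :
    (KSp R n 1 × KSp R n 0) →ₗ[R] KSp R n 0 :=
  (koszulD x 0).comp (LinearMap.fst R _ _) - c • (LinearMap.snd R _ _)

/-- Differential `𝓑_{j+2} = ⋀^{j+2}Rⁿ ⊕ ⋀^{j+1}Rⁿ → 𝓑_{j+1} = ⋀^{j+1}Rⁿ ⊕ ⋀ʲRⁿ` of
the mapping cone: `β(ω, η) = (ι_x ω + (−1)^{j+2} c η, ι_x η)`. -/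
noncomputable def coneDsucc {R : Type*} [CommRing R] {n : ℕ} (x : Fin n → R) (c : R)
    (j : ℕ) : (KSp R n (j + 2) × KSp R n (j + 1)) →ₗ[R] (KSp R n (j + 1) × KSp R n j) :=
  LinearMap.prod
    ((koszulD x (j + 1)).comp (LinearMap.fst R _ _) +
      ((-1 : R) ^ (j + 2) * c) • (LinearMap.snd R _ _))
    ((koszulD x j).comp (LinearMap.snd R _ _))


section AbstractCone

variable {R : Type*} [CommRing R] (A : ℕ → Type*) [∀ j, AddCommGroup (A j)]
  [∀ j, Module R (A j)] (d : ∀ j, A (j + 1) →ₗ[R] A j) (c : R)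

noncomputable def cD0 : (A 1 × A 0) →ₗ[R] A 0 :=
  (d 0).comp (LinearMap.fst R _ _) - c • (LinearMap.snd R _ _)

noncomputable def cDsucc (j : ℕ) : (A (j + 2) × A (j + 1)) →ₗ[R] (A (j + 1) × A j) :=
  LinearMap.prod
    ((d (j + 1)).comp (LinearMap.fst R _ _) +
      ((-1 : R) ^ (j + 2) * c) • (LinearMap.snd R _ _))
    ((d j).comp (LinearMap.snd R _ _))

lemma cD0_apply (p : A 1 × A 0) : cD0 A d c p = d 0 p.1 - c • p.2 := rfl

lemma cDsucc_apply (j : ℕ) (p : A (j + 2) × A (j + 1)) :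
    cDsucc A d c j p = (d (j + 1) p.1 + ((-1 : R) ^ (j + 2) * c) • p.2, d j p.2) := rfl

/-- Element-wise exactness of a complex at spot `j+1`. -/
def IsEx (j : ℕ) : Prop := ∀ a : A (j + 1), d j a = 0 → ∃ b, d (j + 1) b = a

variable {A d c}

lemma cone_ex_high {j : ℕ} (h1 : IsEx A d j) (h2 : IsEx A d (j + 1))
    (p : A (j + 2) × A (j + 1)) (hp : cDsucc A d c j p = 0) :
    ∃ q, cDsucc A d c (j + 1) q = p := by
  obtain ⟨ω, η⟩ := p
  have h₁ : d (j + 1) ω + ((-1 : R) ^ (j + 2) * c) • η = 0 := congrArg Prod.fst hp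
  have h₂ : d j η = 0 := congrArg Prod.snd hp
  obtain ⟨ξ, hξ⟩ := h1 η h₂
  obtain ⟨ζ, hζ⟩ := h2 (ω + ((-1 : R) ^ (j + 2) * c) • ξ)
    (by rw [map_add, map_smul, hξ]; exact h₁)
  refine ⟨(ζ, ξ), ?_⟩
  rw [cDsucc_apply]
  refine Prod.ext ?_ hξ
  show d (j + 2) ζ + ((-1 : R) ^ (j + 3) * c) • ξ = ω
  rw [hζ]
  have : ((-1 : R) ^ (j + 3) * c) = -(((-1 : R) ^ (j + 2) * c)) := by ring
  rw [this, neg_smul]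
  abel

lemma cone_ex_one' (h0 : IsEx A d 0)
    (p : A 1 × A 0) (hp : cD0 A d c p = 0) (hm : p.2 ∈ LinearMap.range (d 0)) :
    ∃ q, cDsucc A d c 0 q = p := by
  obtain ⟨ω, η⟩ := p
  obtain ⟨ξ, hξ⟩ := hm
  have hp' : d 0 ω - c • η = 0 := hp
  obtain ⟨ζ, hζ⟩ := h0 (ω - c • ξ) (by rw [map_sub, map_smul, hξ]; exact hp')
  refine ⟨(ζ, ξ), ?_⟩
  rw [cDsucc_apply]
  refine Prod.ext ?_ hξ
  show d 1 ζ + ((-1 : R) ^ 2 * c) • ξ = ω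
  rw [hζ]
  norm_num

lemma cone_ex_one (h0 : IsEx A d 0)
    (hreg : ∀ a : A 0, c • a ∈ LinearMap.range (d 0) → a ∈ LinearMap.range (d 0))
    (p : A 1 × A 0) (hp : cD0 A d c p = 0) :
    ∃ q, cDsucc A d c 0 q = p := by
  refine cone_ex_one' h0 p hp (hreg p.2 ⟨p.1, ?_⟩)
  have hp' : d 0 p.1 - c • p.2 = 0 := hp
  linear_combination (norm := abel) hp'

lemma isEx_of_equiv {A B : ℕ → Type*} [∀ j, AddCommGroup (A j)] [∀ j, Module R (A j)]
    [∀ j, AddCommGroup (B j)] [∀ j, Module R (B j)]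
    (d : ∀ j, A (j + 1) →ₗ[R] A j) (d' : ∀ j, B (j + 1) →ₗ[R] B j)
    (e : ∀ j, A j ≃ₗ[R] B j)
    (hcomm : ∀ j (a : A (j + 1)), e j (d j a) = d' j (e (j + 1) a))
    (j : ℕ) (h : IsEx A d j) : IsEx B d' j := by
  intro a ha
  obtain ⟨b, hb⟩ := h ((e (j + 1)).symm a) (by
    apply (e j).injective
    rw [hcomm, (e (j + 1)).apply_symm_apply, ha, map_zero])
  exact ⟨e (j + 2) b, by rw [← hcomm, hb, (e (j + 1)).apply_symm_apply]⟩

end AbstractCone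

abbrev KMSp (R : Type*) [CommRing R] (n m j : ℕ) : Type _ :=
  {s : Finset (Fin n) // s.card = j ∧ ∀ i ∈ s, (i : ℕ) < m} → R

section Model

variable {R : Type*} [CommRing R] {n : ℕ}

lemma KM_insert_pf {m j : ℕ} (t : {s : Finset (Fin n) // s.card = j ∧ ∀ i ∈ s, (i : ℕ) < m})
    {i : Fin n} (h : (i : ℕ) < m ∧ i ∉ t.1) :
    (insert i t.1).card = j + 1 ∧ ∀ a ∈ insert i t.1, (a : ℕ) < m := by
  refine ⟨by rw [Finset.card_insert_of_notMem h.2, t.2.1], fun a ha => ?_⟩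
  rcases Finset.mem_insert.mp ha with h' | h'
  · exact h' ▸ h.1
  · exact t.2.2 a h'

/-- Truncated Koszul differential using only `x i` for `i < m`. -/
noncomputable def dM (x : Fin n → R) (m j : ℕ) : KMSp R n m (j + 1) →ₗ[R] KMSp R n m j where
  toFun ω t := ∑ i : Fin n,
    if h : (i : ℕ) < m ∧ i ∉ t.1 then
      (-1 : R) ^ (t.1.filter (· < i)).card * x i * ω ⟨insert i t.1, KM_insert_pf t h⟩
    else 0
  map_add' ω η := funext fun t => by
    dsimp only [Pi.add_apply]
    rw [← Finset.sum_add_distrib]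
    refine Finset.sum_congr rfl fun i _ => ?_
    split_ifs with h
    · ring
    · simp
  map_smul' r ω := funext fun t => by
    dsimp only [Pi.smul_apply, RingHom.id_apply, smul_eq_mul]
    rw [Finset.mul_sum]
    refine Finset.sum_congr rfl fun i _ => ?_
    split_ifs with h
    · ring
    · simp

lemma dM_apply (x : Fin n → R) (m j : ℕ) (ω : KMSp R n m (j + 1))
    (t : {s : Finset (Fin n) // s.card = j ∧ ∀ i ∈ s, (i : ℕ) < m}) :
    dM x m j ω t = ∑ i : Fin n,
      if h : (i : ℕ) < m ∧ i ∉ t.1 then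
        (-1 : R) ^ (t.1.filter (· < i)).card * x i * ω ⟨insert i t.1, KM_insert_pf t h⟩
      else 0 := rfl

/-- The unique index in degree 0. -/
def pt0 (n m : ℕ) : {s : Finset (Fin n) // s.card = 0 ∧ ∀ i ∈ s, (i : ℕ) < m} :=
  ⟨∅, by simp⟩

lemma eq_pt0 {m : ℕ} (t : {s : Finset (Fin n) // s.card = 0 ∧ ∀ i ∈ s, (i : ℕ) < m}) :
    t = pt0 n m :=
  Subtype.ext (Finset.card_eq_zero.mp t.2.1)

noncomputable def ev0 (R : Type*) [CommRing R] (n m : ℕ) : KMSp R n m 0 ≃ₗ[R] R where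
  toFun f := f (pt0 n m)
  invFun r := fun _ => r
  map_add' _ _ := rfl
  map_smul' _ _ := rfl
  left_inv f := funext fun t => by rw [eq_pt0 t]
  right_inv r := rfl

lemma mem_range_dM0 (x : Fin n → R) (m : ℕ) (a : KMSp R n m 0) :
    a ∈ LinearMap.range (dM x m 0) ↔
      a (pt0 n m) ∈ Ideal.span (x '' {j : Fin n | (j : ℕ) < m}) := by
  constructor
  · rintro ⟨ω, rfl⟩
    rw [dM_apply]
    refine Ideal.sum_mem _ fun i _ => ?_
    split_ifs with h
    · exact Ideal.mul_mem_right _ _ (Ideal.mul_mem_left _ _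
        (Ideal.subset_span ⟨i, h.1, rfl⟩))
    · exact Ideal.zero_mem _
  · intro ha
    have key : ∀ r ∈ Ideal.span (x '' {j : Fin n | (j : ℕ) < m}),
        ∃ ω, dM x m 0 ω = (fun _ => r : KMSp R n m 0) := by
      intro r hr
      refine Submodule.span_induction ?_ ?_ ?_ ?_ hr
      · rintro y ⟨i, hi, rfl⟩
        refine ⟨Pi.single ⟨{i}, by simpa using hi⟩ 1, funext fun t => ?_⟩
        rw [dM_apply]
        rw [Finset.sum_eq_single i]
        · have hc : (i : ℕ) < m ∧ i ∉ t.1 := by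
            constructor
            · exact hi
            · rw [Finset.card_eq_zero.mp t.2.1]; exact Finset.notMem_empty i
          rw [dif_pos hc]
          have ht : t.1 = ∅ := Finset.card_eq_zero.mp t.2.1
          have harg : (⟨insert i t.1, KM_insert_pf t hc⟩ :
              {s : Finset (Fin n) // s.card = 1 ∧ ∀ a ∈ s, (a : ℕ) < m}) =
              ⟨{i}, by simpa using hi⟩ := by
            apply Subtype.ext
            show insert i t.1 = {i}
            rw [ht]; rfl
          rw [harg, Pi.single_eq_same, ht]
          simp
        · intro b _ hb
          split_ifs with hcb
          · have : (⟨insert b t.1, KM_insert_pf t hcb⟩ :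
                {s : Finset (Fin n) // s.card = 1 ∧ ∀ a ∈ s, (a : ℕ) < m}) ≠
                ⟨{i}, by simpa using hi⟩ := by
              intro he
              apply hb
              have hval : insert b t.1 = {i} := congrArg Subtype.val he
              rw [Finset.card_eq_zero.mp t.2.1] at hval
              simpa using hval
            rw [Pi.single_eq_of_ne this]
            ring
          · rfl
        · intro hi'; exact absurd (Finset.mem_univ i) hi'
      · exact ⟨0, by rw [map_zero]; funext _; rfl⟩
      · rintro y z - - ⟨ω₁, h₁⟩ ⟨ω₂, h₂⟩
        exact ⟨ω₁ + ω₂, by rw [map_add, h₁, h₂]; funext _; rfl⟩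
      · rintro r y - ⟨ω, hω⟩
        exact ⟨r • ω, by rw [map_smul, hω]; funext _; rfl⟩
    obtain ⟨ω, hω⟩ := key _ ha
    refine ⟨ω, funext fun t => ?_⟩
    rw [hω, eq_pt0 t]

end Model
section Model2

variable {R : Type*} [CommRing R] {n : ℕ}

lemma K_insert_pf {j : ℕ} (t : {s : Finset (Fin n) // s.card = j})
    {i : Fin n} (h : i ∉ t.1) : (insert i t.1).card = j + 1 := by
  rw [Finset.card_insert_of_notMem h, t.2]

/-- Full-model equivalence when `n ≤ m`. -/
noncomputable def eKM (R : Type*) [CommRing R] {n : ℕ} (m j : ℕ) (hm : n ≤ m) :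
    KMSp R n m j ≃ₗ[R] KSp R n j where
  toFun ω t := ω ⟨t.1, t.2, fun i _ => lt_of_lt_of_le i.isLt hm⟩
  invFun ω t := ω ⟨t.1, t.2.1⟩
  map_add' _ _ := rfl
  map_smul' _ _ := rfl
  left_inv _ := rfl
  right_inv _ := rfl

lemma koszulD_apply (x : Fin n → R) (j : ℕ) (ω : KSp R n (j + 1))
    (t : {s : Finset (Fin n) // s.card = j}) :
    koszulD x j ω t = ∑ i : Fin n,
      if h : i ∈ t.1 then 0
      else (-1 : R) ^ (t.1.filter (· < i)).card * x i * ω ⟨insert i t.1, K_insert_pf t h⟩ := rfl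

lemma eKM_comm (x : Fin n → R) (m j : ℕ) (hm : n ≤ m) (ω : KMSp R n m (j + 1)) :
    eKM R m j hm (dM x m j ω) = koszulD x j (eKM R m (j + 1) hm ω) := by
  funext t
  rw [koszulD_apply]
  show dM x m j ω _ = _
  rw [dM_apply]
  refine Finset.sum_congr rfl fun i _ => ?_
  by_cases hi : i ∈ t.1
  · rw [dif_neg (by simp [hi]), dif_pos hi]
  · rw [dif_pos ⟨lt_of_lt_of_le i.isLt hm, hi⟩, dif_neg hi]
    rfl

end Model2
section Phi

variable {R : Type*} [CommRing R] {n m : ℕ}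

lemma Phi_ins_pf {m j : ℕ} (hm : m < n)
    (t : {s : Finset (Fin n) // s.card = j ∧ ∀ i ∈ s, (i : ℕ) < m}) :
    (insert ⟨m, hm⟩ t.1).card = j + 1 ∧ ∀ i ∈ insert (⟨m, hm⟩ : Fin n) t.1, (i : ℕ) < m + 1 := by
  have hnot : (⟨m, hm⟩ : Fin n) ∉ t.1 := fun h => lt_irrefl m (t.2.2 _ h)
  refine ⟨by rw [Finset.card_insert_of_notMem hnot, t.2.1], fun i hi => ?_⟩
  rcases Finset.mem_insert.mp hi with h | h
  · rw [h]; exact Nat.lt_succ_self m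
  · exact Nat.lt_succ_of_lt (t.2.2 i h)

lemma Phi_erase_pf {m j : ℕ} (hm : m < n)
    (t : {s : Finset (Fin n) // s.card = j + 1 ∧ ∀ i ∈ s, (i : ℕ) < m + 1})
    (h : (⟨m, hm⟩ : Fin n) ∈ t.1) :
    (t.1.erase ⟨m, hm⟩).card = j ∧ ∀ i ∈ t.1.erase ⟨m, hm⟩, (i : ℕ) < m := by
  refine ⟨by rw [Finset.card_erase_of_mem h, t.2.1]; rfl, fun i hi => ?_⟩
  have h1 := Finset.mem_erase.mp hi
  have h2 : (i : ℕ) ≠ m := fun he => h1.1 (Fin.ext he)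
  exact lt_of_le_of_ne (Nat.lt_succ_iff.mp (t.2.2 i h1.2)) h2

lemma Phi_rel_pf {m j : ℕ} (t : {s : Finset (Fin n) // s.card = j ∧ ∀ i ∈ s, (i : ℕ) < m}) :
    t.1.card = j ∧ ∀ i ∈ t.1, (i : ℕ) < m + 1 :=
  ⟨t.2.1, fun i hi => Nat.lt_succ_of_lt (t.2.2 i hi)⟩

lemma Phi_notmem_pf {m j : ℕ} (hm : m < n)
    (t : {s : Finset (Fin n) // s.card = j ∧ ∀ i ∈ s, (i : ℕ) < m + 1})
    (h : (⟨m, hm⟩ : Fin n) ∉ t.1) : t.1.card = j ∧ ∀ i ∈ t.1, (i : ℕ) < m := by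
  refine ⟨t.2.1, fun i hi => ?_⟩
  have h2 : (i : ℕ) ≠ m := fun he => h (by rwa [show i = (⟨m, hm⟩ : Fin n) from Fin.ext he] at hi)
  exact lt_of_le_of_ne (Nat.lt_succ_iff.mp (t.2.2 i hi)) h2

/-- Splitting of the `(m+1)`-truncated Koszul space as cone over the `m`-truncated one. -/
noncomputable def PhiM (hm : m < n) (j : ℕ) :
    KMSp R n (m + 1) (j + 1) ≃ₗ[R] KMSp R n m (j + 1) × KMSp R n m j where
  toFun ω := (fun t => ω ⟨t.1, Phi_rel_pf t⟩, fun t => -ω ⟨insert ⟨m, hm⟩ t.1, Phi_ins_pf hm t⟩)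
  invFun p t :=
    if h : (⟨m, hm⟩ : Fin n) ∈ t.1 then -p.2 ⟨t.1.erase ⟨m, hm⟩, Phi_erase_pf hm t h⟩
    else p.1 ⟨t.1, Phi_notmem_pf hm t h⟩
  map_add' ω η := Prod.ext rfl (funext fun t => neg_add _ _)
  map_smul' r ω := Prod.ext rfl (funext fun t => (smul_neg r _).symm)
  left_inv ω := funext fun t => by
    dsimp only
    by_cases h : (⟨m, hm⟩ : Fin n) ∈ t.1
    · rw [dif_pos h, neg_neg]
      exact congrArg ω (Subtype.ext (Finset.insert_erase h))
    · rw [dif_neg h]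
  right_inv p := by
    refine Prod.ext (funext fun t => ?_) (funext fun t => ?_)
    · have h : (⟨m, hm⟩ : Fin n) ∉ t.1 := fun h => lt_irrefl m (t.2.2 _ h)
      show (if h : (⟨m, hm⟩ : Fin n) ∈ t.1 then _ else _) = p.1 t
      rw [dif_neg h]
    · have hnt : (⟨m, hm⟩ : Fin n) ∉ t.1 := fun h => lt_irrefl m (t.2.2 _ h)
      have h : (⟨m, hm⟩ : Fin n) ∈ insert (⟨m, hm⟩ : Fin n) t.1 := Finset.mem_insert_self _ _
      show -(if h : (⟨m, hm⟩ : Fin n) ∈ insert (⟨m, hm⟩ : Fin n) t.1 then _ else _) = p.2 t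
      rw [dif_pos h, neg_neg]
      exact congrArg p.2 (Subtype.ext (Finset.erase_insert hnt))

lemma PhiM_fst_apply (hm : m < n) (j : ℕ) (ω : KMSp R n (m + 1) (j + 1))
    (t : {s : Finset (Fin n) // s.card = j + 1 ∧ ∀ i ∈ s, (i : ℕ) < m}) :
    (PhiM hm j ω).1 t = ω ⟨t.1, Phi_rel_pf t⟩ := rfl

lemma PhiM_snd_apply (hm : m < n) (j : ℕ) (ω : KMSp R n (m + 1) (j + 1))
    (t : {s : Finset (Fin n) // s.card = j ∧ ∀ i ∈ s, (i : ℕ) < m}) :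
    (PhiM hm j ω).2 t = -ω ⟨insert ⟨m, hm⟩ t.1, Phi_ins_pf hm t⟩ := rfl

/-- Degree-0 part of the cone splitting. -/
noncomputable def PhiM0 (hm : m < n) : KMSp R n (m + 1) 0 ≃ₗ[R] KMSp R n m 0 where
  toFun f t := f ⟨t.1, Phi_rel_pf t⟩
  invFun f t := f ⟨t.1, t.2.1, fun i hi => by
    rw [Finset.card_eq_zero.mp t.2.1] at hi; exact absurd hi (Finset.notMem_empty i)⟩
  map_add' _ _ := rfl
  map_smul' _ _ := rfl
  left_inv _ := rfl
  right_inv _ := rfl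

end Phi
section Comm

variable {R : Type*} [CommRing R] {n m : ℕ}

lemma PhiM_comm_succ (x : Fin n → R) (hm : m < n) (j : ℕ) (ω : KMSp R n (m + 1) (j + 2)) :
    PhiM hm j (dM x (m + 1) (j + 1) ω) =
      cDsucc (KMSp R n m) (dM x m) (x ⟨m, hm⟩) j (PhiM hm (j + 1) ω) := by
  refine Prod.ext (funext fun t => ?_) (funext fun t => ?_)
  · show dM x (m + 1) (j + 1) ω ⟨t.1, Phi_rel_pf t⟩ =
      dM x m (j + 1) (PhiM hm (j + 1) ω).1 t +
        ((-1 : R) ^ (j + 2) * x ⟨m, hm⟩) * (PhiM hm (j + 1) ω).2 t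
    rw [dM_apply, dM_apply, PhiM_snd_apply]
    dsimp only
    have hfm : (⟨m, hm⟩ : Fin n) ∉ t.1 := fun h => lt_irrefl m (t.2.2 _ h)
    rw [← sub_eq_iff_eq_add', ← Finset.sum_sub_distrib]
    refine Eq.trans (Finset.sum_eq_single (⟨m, hm⟩ : Fin n) ?_ ?_) ?_
    · intro b _ hb
      have hbm : (b : ℕ) ≠ m := fun h => hb (Fin.ext h)
      by_cases hbt : b ∈ t.1
      · rw [dif_neg (fun hc => hc.2 hbt), dif_neg (fun hc => hc.2 hbt), sub_self]
      · by_cases hbm' : (b : ℕ) < m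
        · rw [dif_pos ⟨Nat.lt_succ_of_lt hbm', hbt⟩, dif_pos ⟨hbm', hbt⟩, PhiM_fst_apply]
          exact sub_eq_zero_of_eq rfl
        · rw [dif_neg (fun hc => hbm' (lt_of_le_of_ne (Nat.lt_succ_iff.mp hc.1) hbm)),
            dif_neg (fun hc => hbm' hc.1), sub_self]
    · exact fun h => absurd (Finset.mem_univ _) h
    · rw [dif_pos ⟨Nat.lt_succ_self m, hfm⟩, dif_neg (fun hc => lt_irrefl m hc.1)]
      have hfil : t.1.filter (· < (⟨m, hm⟩ : Fin n)) = t.1 :=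
        Finset.filter_true_of_mem fun i hi => Fin.lt_def.mpr (t.2.2 i hi)
      rw [hfil, t.2.1]
      ring
  · show -(dM x (m + 1) (j + 1) ω) ⟨insert ⟨m, hm⟩ t.1, Phi_ins_pf hm t⟩ =
      dM x m j (PhiM hm (j + 1) ω).2 t
    rw [dM_apply, dM_apply, ← neg_inj, neg_neg, ← Finset.sum_neg_distrib]
    refine Finset.sum_congr rfl fun i _ => ?_
    by_cases him : (i : ℕ) < m
    · have hifm : i ≠ ⟨m, hm⟩ := fun he => absurd (congrArg Fin.val he) (Nat.ne_of_lt him)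
      by_cases hit : i ∈ t.1
      · rw [dif_neg (fun hc => hc.2 (Finset.mem_insert_of_mem hit)),
          dif_neg (fun hc => hc.2 hit), neg_zero]
      · rw [dif_pos ⟨Nat.lt_succ_of_lt him,
            by simp [Finset.mem_insert, hifm, hit]⟩,
          dif_pos ⟨him, hit⟩, PhiM_snd_apply]
        dsimp only
        have hfil : (insert (⟨m, hm⟩ : Fin n) t.1).filter (· < i) = t.1.filter (· < i) := by
          rw [Finset.filter_insert, if_neg]
          exact fun hlt => absurd (Fin.lt_def.mp hlt) (Nat.not_lt.mpr (Nat.le_of_lt him))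
        rw [hfil]
        simp only [Finset.insert_comm i ⟨m, hm⟩ t.1]
        rw [mul_neg, neg_neg]
    · rw [dif_neg (fun hc => him (lt_of_le_of_ne (Nat.lt_succ_iff.mp hc.1)
          (fun he => hc.2 (Finset.mem_insert.mpr (Or.inl (Fin.ext he)))))),
        dif_neg (fun hc => him hc.1), neg_zero]

lemma PhiM_comm_zero (x : Fin n → R) (hm : m < n) (ω : KMSp R n (m + 1) 1) :
    PhiM0 hm (dM x (m + 1) 0 ω) =
      cD0 (KMSp R n m) (dM x m) (x ⟨m, hm⟩) (PhiM hm 0 ω) := by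
  funext t
  show dM x (m + 1) 0 ω ⟨t.1, Phi_rel_pf t⟩ =
    dM x m 0 (PhiM hm 0 ω).1 t - x ⟨m, hm⟩ * (PhiM hm 0 ω).2 t
  rw [dM_apply, dM_apply, PhiM_snd_apply]
  dsimp only
  have hfm : (⟨m, hm⟩ : Fin n) ∉ t.1 := fun h => lt_irrefl m (t.2.2 _ h)
  rw [sub_eq_add_neg, ← sub_eq_iff_eq_add', ← Finset.sum_sub_distrib]
  refine Eq.trans (Finset.sum_eq_single (⟨m, hm⟩ : Fin n) ?_ ?_) ?_
  · intro b _ hb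
    have hbm : (b : ℕ) ≠ m := fun h => hb (Fin.ext h)
    by_cases hbt : b ∈ t.1
    · rw [dif_neg (fun hc => hc.2 hbt), dif_neg (fun hc => hc.2 hbt), sub_self]
    · by_cases hbm' : (b : ℕ) < m
      · rw [dif_pos ⟨Nat.lt_succ_of_lt hbm', hbt⟩, dif_pos ⟨hbm', hbt⟩, PhiM_fst_apply]
        exact sub_eq_zero_of_eq rfl
      · rw [dif_neg (fun hc => hbm' (lt_of_le_of_ne (Nat.lt_succ_iff.mp hc.1) hbm)),
          dif_neg (fun hc => hbm' hc.1), sub_self]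
  · exact fun h => absurd (Finset.mem_univ _) h
  · rw [dif_pos ⟨Nat.lt_succ_self m, hfm⟩, dif_neg (fun hc => lt_irrefl m hc.1)]
    have hfil : t.1.filter (· < (⟨m, hm⟩ : Fin n)) = t.1 :=
      Finset.filter_true_of_mem fun i hi => Fin.lt_def.mpr (t.2.2 i hi)
    rw [hfil, t.2.1]
    ring

end Comm
section Exact

variable {R : Type*} [CommRing R] {n : ℕ}

lemma isEx_KM_zero (x : Fin n → R) (j : ℕ) : IsEx (KMSp R n 0) (dM x 0) j := by
  intro a _
  refine ⟨fun _ => 0, ?_⟩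
  funext t
  obtain ⟨i, hi⟩ := Finset.card_pos.mp (by rw [t.2.1]; omega)
  exact absurd (t.2.2 i hi) (Nat.not_lt_zero _)

lemma isEx_KM (x : Fin n → R)
    (hreg : ∀ i : Fin n, (i : ℕ) < n - 1 → ∀ r : R,
      r * x i ∈ Ideal.span (x '' {j : Fin n | (j : ℕ) < (i : ℕ)}) →
      r ∈ Ideal.span (x '' {j : Fin n | (j : ℕ) < (i : ℕ)})) :
    ∀ m, m ≤ n - 1 → ∀ j, IsEx (KMSp R n m) (dM x m) j := by
  intro m
  induction m with
  | zero => exact fun _ j => isEx_KM_zero x j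
  | succ m ih =>
    intro hm1 j
    have hmn1 : m < n - 1 := lt_of_lt_of_le (Nat.lt_succ_self m) hm1
    have hmn : m < n := lt_of_lt_of_le hmn1 (Nat.sub_le n 1)
    have hex : ∀ j, IsEx (KMSp R n m) (dM x m) j := ih (le_of_lt hmn1)
    have hregm : ∀ b : KMSp R n m 0, x ⟨m, hmn⟩ • b ∈ LinearMap.range (dM x m 0) →
        b ∈ LinearMap.range (dM x m 0) := by
      intro b hb
      rw [mem_range_dM0] at hb ⊢
      refine hreg ⟨m, hmn⟩ hmn1 _ ?_
      have he : (x ⟨m, hmn⟩ • b) (pt0 n m) = b (pt0 n m) * x ⟨m, hmn⟩ := mul_comm _ _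
      rwa [he] at hb
    match j with
    | 0 =>
      intro a ha
      have h0 : cD0 (KMSp R n m) (dM x m) (x ⟨m, hmn⟩) (PhiM hmn 0 a) = 0 := by
        rw [← PhiM_comm_zero x hmn a, ha, map_zero]
      obtain ⟨q, hq⟩ := cone_ex_one (hex 0) hregm (PhiM hmn 0 a) h0
      refine ⟨(PhiM hmn 1).symm q, ?_⟩
      apply (PhiM hmn 0).injective
      rw [PhiM_comm_succ x hmn 0, (PhiM hmn 1).apply_symm_apply, hq]
    | j + 1 =>
      intro a ha
      have h1 : cDsucc (KMSp R n m) (dM x m) (x ⟨m, hmn⟩) j (PhiM hmn (j + 1) a) = 0 := by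
        rw [← PhiM_comm_succ x hmn j a, ha, map_zero]
      obtain ⟨q, hq⟩ := cone_ex_high (hex j) (hex (j + 1)) _ h1
      refine ⟨(PhiM hmn (j + 2)).symm q, ?_⟩
      apply (PhiM hmn (j + 1)).injective
      rw [PhiM_comm_succ x hmn (j + 1), (PhiM hmn (j + 2)).apply_symm_apply, hq]

/-- The equivalence exhibiting the full Koszul complex as a cone over the
`(n-1)`-truncated one, in positive degrees. -/
noncomputable def ThS (R : Type*) [CommRing R] {n : ℕ} (hn : 1 ≤ n) (j : ℕ) :
    KSp R n (j + 1) ≃ₗ[R] KMSp R n (n - 1) (j + 1) × KMSp R n (n - 1) j :=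
  (eKM R ((n - 1) + 1) (j + 1) (by omega)).symm.trans (PhiM (Nat.sub_lt hn Nat.one_pos) j)

/-- Degree-0 part. -/
noncomputable def ThS0 (R : Type*) [CommRing R] {n : ℕ} (hn : 1 ≤ n) :
    KSp R n 0 ≃ₗ[R] KMSp R n (n - 1) 0 :=
  (eKM R ((n - 1) + 1) 0 (by omega)).symm.trans (PhiM0 (Nat.sub_lt hn Nat.one_pos))

lemma ThS_comm (x : Fin n → R) (hn : 1 ≤ n) (j : ℕ) (ω : KSp R n (j + 2)) :
    ThS R hn j (koszulD x (j + 1) ω) =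
      cDsucc (KMSp R n (n - 1)) (dM x (n - 1)) (x ⟨n - 1, Nat.sub_lt hn Nat.one_pos⟩) j
        (ThS R hn (j + 1) ω) := by
  unfold ThS
  simp only [LinearEquiv.trans_apply]
  rw [← PhiM_comm_succ]
  congr 1
  apply (eKM R ((n - 1) + 1) (j + 1) (by omega)).injective
  rw [LinearEquiv.apply_symm_apply, eKM_comm, LinearEquiv.apply_symm_apply]

lemma ThS0_comm (x : Fin n → R) (hn : 1 ≤ n) (ω : KSp R n 1) :
    ThS0 R hn (koszulD x 0 ω) =
      cD0 (KMSp R n (n - 1)) (dM x (n - 1)) (x ⟨n - 1, Nat.sub_lt hn Nat.one_pos⟩)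
        (ThS R hn 0 ω) := by
  unfold ThS ThS0
  simp only [LinearEquiv.trans_apply]
  rw [← PhiM_comm_zero]
  congr 1
  apply (eKM R ((n - 1) + 1) 0 (by omega)).injective
  rw [LinearEquiv.apply_symm_apply, eKM_comm, LinearEquiv.apply_symm_apply]

lemma isEx_K (x : Fin n → R) (hn : 1 ≤ n)
    (hreg : ∀ i : Fin n, (i : ℕ) < n - 1 → ∀ r : R,
      r * x i ∈ Ideal.span (x '' {j : Fin n | (j : ℕ) < (i : ℕ)}) →
      r ∈ Ideal.span (x '' {j : Fin n | (j : ℕ) < (i : ℕ)}))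
    (j : ℕ) : IsEx (KSp R n) (koszulD x) (j + 1) := by
  have hKM := isEx_KM x hreg (n - 1) le_rfl
  intro a ha
  have h1 : cDsucc (KMSp R n (n - 1)) (dM x (n - 1)) (x ⟨n - 1, Nat.sub_lt hn Nat.one_pos⟩) j
      (ThS R hn (j + 1) a) = 0 := by
    rw [← ThS_comm x hn j a, ha, map_zero]
  obtain ⟨q, hq⟩ := cone_ex_high (hKM j) (hKM (j + 1)) _ h1
  refine ⟨(ThS R hn (j + 2)).symm q, ?_⟩
  apply (ThS R hn (j + 1)).injective
  rw [ThS_comm, LinearEquiv.apply_symm_apply, hq]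

end Exact
section Concrete

variable {R : Type*} [CommRing R] {n : ℕ}

lemma PhiM_symm_apply {m : ℕ} (hm : m < n) (j : ℕ)
    (p : KMSp R n m (j + 1) × KMSp R n m j)
    (t : {s : Finset (Fin n) // s.card = j + 1 ∧ ∀ i ∈ s, (i : ℕ) < m + 1}) :
    (PhiM hm j).symm p t =
      if h : (⟨m, hm⟩ : Fin n) ∈ t.1 then -p.2 ⟨t.1.erase ⟨m, hm⟩, Phi_erase_pf hm t h⟩
      else p.1 ⟨t.1, Phi_notmem_pf hm t h⟩ := rfl

/-- The basic syzygy identity: for a cycle `η` in degree 1, `∑ xᵢ ηᵢ = 0`. -/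
lemma cycle_sum (x : Fin n → R) (η : KSp R n 1) (hc : koszulD x 0 η = 0) :
    ∑ i : Fin n, x i * η ⟨{i}, by simp⟩ = 0 := by
  have h0 : koszulD x 0 η ⟨∅, rfl⟩ = 0 := by rw [hc]; rfl
  rw [koszulD_apply] at h0
  rw [← h0]
  refine Finset.sum_congr rfl fun i _ => ?_
  rw [dif_neg (Finset.notMem_empty i)]
  have hone : ((-1 : R) ^ (Finset.filter (· < i) (∅ : Finset (Fin n))).card) = 1 := by simp
  rw [hone, one_mul]
  exact congrArg (fun z => x i * η z) (Subtype.ext (by simp))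

lemma cycle_last_ann (x : Fin n → R) (hn : 1 ≤ n) (η : KSp R n 1)
    (hc : koszulD x 0 η = 0) :
    x ⟨n - 1, Nat.sub_lt hn Nat.one_pos⟩ * η ⟨{⟨n - 1, Nat.sub_lt hn Nat.one_pos⟩}, by simp⟩ ∈
      Ideal.span (x '' {j : Fin n | (j : ℕ) < n - 1}) := by
  have h1 := cycle_sum x η hc
  have h2 := Finset.add_sum_erase Finset.univ
    (fun i => x i * η ⟨{i}, by simp⟩) (Finset.mem_univ (⟨n - 1, Nat.sub_lt hn Nat.one_pos⟩ : Fin n))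
  rw [h1] at h2
  have h3 : x (⟨n - 1, Nat.sub_lt hn Nat.one_pos⟩ : Fin n) *
      η ⟨{(⟨n - 1, Nat.sub_lt hn Nat.one_pos⟩ : Fin n)}, by simp⟩ =
      -∑ i ∈ Finset.univ.erase (⟨n - 1, Nat.sub_lt hn Nat.one_pos⟩ : Fin n),
        x i * η ⟨{i}, by simp⟩ :=
    eq_neg_of_add_eq_zero_left h2
  rw [h3]
  refine Submodule.neg_mem _ (Ideal.sum_mem _ fun i hi => ?_)
  have hne : (i : ℕ) ≠ n - 1 :=
    fun he => (Finset.mem_erase.mp hi).1 (Fin.ext he)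
  have hlt : (i : ℕ) < n - 1 := by have := i.isLt; omega
  exact Ideal.mul_mem_right _ _ (Ideal.subset_span ⟨i, hlt, rfl⟩)

lemma boundary_last (x : Fin n → R) (hn : 1 ≤ n) (ξ : KSp R n 2) :
    koszulD x 1 ξ ⟨{⟨n - 1, Nat.sub_lt hn Nat.one_pos⟩}, by simp⟩ ∈
      Ideal.span (x '' {j : Fin n | (j : ℕ) < n - 1}) := by
  rw [koszulD_apply]
  refine Ideal.sum_mem _ fun i _ => ?_
  split_ifs with h
  · exact Ideal.zero_mem _
  · have hne : (i : ℕ) ≠ n - 1 := fun he => h (by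
      have : i = (⟨n - 1, Nat.sub_lt hn Nat.one_pos⟩ : Fin n) := Fin.ext he
      rw [this]; exact Finset.mem_singleton_self _)
    have hlt : (i : ℕ) < n - 1 := by have := i.isLt; omega
    exact Ideal.mul_mem_right _ _ (Ideal.mul_mem_left _ _
      (Ideal.subset_span ⟨i, hlt, rfl⟩))

lemma exists_cycle_last (x : Fin n → R) (hn : 1 ≤ n) (r : R)
    (hr : x ⟨n - 1, Nat.sub_lt hn Nat.one_pos⟩ * r ∈
      Ideal.span (x '' {j : Fin n | (j : ℕ) < n - 1})) :
    ∃ η : KSp R n 1, koszulD x 0 η = 0 ∧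
      η ⟨{⟨n - 1, Nat.sub_lt hn Nat.one_pos⟩}, by simp⟩ = r := by
  have hm0 : n - 1 < n := Nat.sub_lt hn Nat.one_pos
  have hmem : x ⟨n - 1, hm0⟩ • (fun _ => -r : KMSp R n (n - 1) 0) ∈
      LinearMap.range (dM x (n - 1) 0) := by
    rw [mem_range_dM0]
    show x ⟨n - 1, hm0⟩ * -r ∈ _
    rw [mul_neg]
    exact Submodule.neg_mem _ hr
  obtain ⟨ω₀, hω₀⟩ := hmem
  refine ⟨(ThS R hn 0).symm (ω₀, fun _ => -r), ?_, ?_⟩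
  · apply (ThS0 R hn).injective
    rw [ThS0_comm, LinearEquiv.apply_symm_apply, map_zero, cD0_apply, hω₀, sub_self]
  · have hidx : (⟨n - 1, hm0⟩ : Fin n) ∈ ({(⟨n - 1, hm0⟩ : Fin n)} : Finset (Fin n)) :=
      Finset.mem_singleton_self _
    have hstep : (ThS R hn 0).symm (ω₀, fun _ => -r)
        ⟨{(⟨n - 1, hm0⟩ : Fin n)}, by simp⟩ =
        (PhiM hm0 0).symm (ω₀, fun _ => -r)
          ⟨{(⟨n - 1, hm0⟩ : Fin n)}, by simp, fun i hi => by
            rw [Finset.mem_singleton.mp hi]; exact Nat.lt_succ_self _⟩ := rfl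
    rw [hstep, PhiM_symm_apply, dif_pos hidx]
    exact neg_neg r
  
lemma cycle_exact_of_last (x : Fin n → R) (hn : 1 ≤ n)
    (hreg : ∀ i : Fin n, (i : ℕ) < n - 1 → ∀ r : R,
      r * x i ∈ Ideal.span (x '' {j : Fin n | (j : ℕ) < (i : ℕ)}) →
      r ∈ Ideal.span (x '' {j : Fin n | (j : ℕ) < (i : ℕ)}))
    (η : KSp R n 1) (hc : koszulD x 0 η = 0)
    (hl : η ⟨{⟨n - 1, Nat.sub_lt hn Nat.one_pos⟩}, by simp⟩ ∈
      Ideal.span (x '' {j : Fin n | (j : ℕ) < n - 1})) :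
    ∃ ξ : KSp R n 2, koszulD x 1 ξ = η := by
  have hm0 : n - 1 < n := Nat.sub_lt hn Nat.one_pos
  have h0 : cD0 (KMSp R n (n - 1)) (dM x (n - 1)) (x ⟨n - 1, hm0⟩) (ThS R hn 0 η) = 0 := by
    rw [← ThS0_comm, hc, map_zero]
  have hmem : (ThS R hn 0 η).2 ∈ LinearMap.range (dM x (n - 1) 0) := by
    rw [mem_range_dM0]
    have hv : (ThS R hn 0 η).2 (pt0 n (n - 1)) =
        -η ⟨{⟨n - 1, hm0⟩}, by simp⟩ := rfl
    rw [hv]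
    exact Submodule.neg_mem _ hl
  obtain ⟨q, hq⟩ := cone_ex_one' (isEx_KM x hreg (n - 1) le_rfl 0) _ h0 hmem
  refine ⟨(ThS R hn 1).symm q, ?_⟩
  apply (ThS R hn 0).injective
  rw [ThS_comm, LinearEquiv.apply_symm_apply, hq]

lemma mem_range_koszulD0 (x : Fin n → R) (a : KSp R n 0) :
    a ∈ LinearMap.range (koszulD x 0) ↔ a ⟨∅, rfl⟩ ∈ Ideal.span (Set.range x) := by
  have hset : {j : Fin n | (j : ℕ) < n} = Set.univ := by
    ext j; simpa using j.isLt
  have himg : x '' {j : Fin n | (j : ℕ) < n} = Set.range x := by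
    rw [hset, Set.image_univ]
  have key : a ∈ LinearMap.range (koszulD x 0) ↔
      (eKM R n 0 le_rfl).symm a ∈ LinearMap.range (dM x n 0) := by
    constructor
    · rintro ⟨ω, rfl⟩
      exact ⟨(eKM R n 1 le_rfl).symm ω, by
        apply (eKM R n 0 le_rfl).injective
        rw [eKM_comm, LinearEquiv.apply_symm_apply, LinearEquiv.apply_symm_apply]⟩
    · rintro ⟨ω, hω⟩
      refine ⟨eKM R n 1 le_rfl ω, ?_⟩
      rw [← eKM_comm x n 0 le_rfl ω, hω, LinearEquiv.apply_symm_apply]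
  rw [key, mem_range_dM0, himg]
  exact Iff.rfl

end Concrete
section Parts

variable {R : Type*} [CommRing R] {n : ℕ}

lemma coneDsucc_eq (x : Fin n → R) (c : R) (j : ℕ) :
    coneDsucc x c j = cDsucc (KSp R n) (koszulD x) c j := rfl

lemma coneD0_eq (x : Fin n → R) (c : R) :
    coneD0 x c = cD0 (KSp R n) (koszulD x) c := rfl

lemma partI (x : Fin n → R) (c : R) (hn : 1 ≤ n)
    (hreg : ∀ i : Fin n, (i : ℕ) < n - 1 → ∀ r : R,
      r * x i ∈ Ideal.span (x '' {j : Fin n | (j : ℕ) < (i : ℕ)}) →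
      r ∈ Ideal.span (x '' {j : Fin n | (j : ℕ) < (i : ℕ)})) :
    ∀ j : ℕ, 1 ≤ j → ∀ p : KSp R n (j + 2) × KSp R n (j + 1), coneDsucc x c j p = 0 →
      ∃ q : KSp R n (j + 3) × KSp R n (j + 2), coneDsucc x c (j + 1) q = p := by
  intro j hj p hp
  obtain ⟨j', rfl⟩ : ∃ j'', j = j'' + 1 := ⟨j - 1, by omega⟩
  rw [coneDsucc_eq] at hp
  have := cone_ex_high (c := c) (isEx_K x hn hreg j') (isEx_K x hn hreg (j' + 1)) p hp
  simpa [coneDsucc_eq] using this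

lemma partIV (x : Fin n → R) (c : R) :
    Nonempty ((KSp R n 0 ⧸ LinearMap.range (coneD0 x c)) ≃ₗ[R]
      R ⧸ (Ideal.span (Set.range x) ⊔ Ideal.span {c})) := by
  set I : Ideal R := Ideal.span (Set.range x) ⊔ Ideal.span {c} with hI
  set pt' : {s : Finset (Fin n) // s.card = 0} := ⟨∅, rfl⟩ with hpt
  set F : KSp R n 0 →ₗ[R] R ⧸ I := I.mkQ.comp (LinearMap.proj pt') with hF
  have hFsurj : Function.Surjective F := by
    intro y
    obtain ⟨r, hr⟩ := Submodule.mkQ_surjective I y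
    exact ⟨fun _ => r, hr⟩
  have hker : LinearMap.range (coneD0 x c) = LinearMap.ker F := by
    ext a
    constructor
    · rintro ⟨p, rfl⟩
      have h1 : (koszulD x 0 p.1) pt' ∈ Ideal.span (Set.range x) :=
        (mem_range_koszulD0 x _).mp ⟨p.1, rfl⟩
      have h2 : c * p.2 pt' ∈ Ideal.span ({c} : Set R) :=
        Ideal.mem_span_singleton.mpr (dvd_mul_right c _)
      have hval : coneD0 x c p pt' = (koszulD x 0 p.1) pt' - c * p.2 pt' := rfl
      simp only [LinearMap.mem_ker, hF, LinearMap.comp_apply, LinearMap.proj_apply]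
      rw [Submodule.mkQ_apply, Submodule.Quotient.mk_eq_zero, hval]
      exact sub_mem (Submodule.mem_sup_left h1) (Submodule.mem_sup_right
        (Submodule.neg_mem _ h2 |> fun h => by simpa using Submodule.neg_mem _ h2))
    · intro ha
      have hmem : a pt' ∈ I := by
        simpa [hF, Submodule.Quotient.mk_eq_zero, Ideal.Quotient.eq_zero_iff_mem] using ha
      rw [hI] at hmem
      obtain ⟨u, hu, v, hv, huv⟩ := Submodule.mem_sup.mp hmem
      obtain ⟨r, hr⟩ := Ideal.mem_span_singleton'.mp hv
      obtain ⟨ω, hω⟩ := (mem_range_koszulD0 x (fun _ => u)).mpr (by simpa using hu)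
      refine ⟨(ω, fun _ => -r), ?_⟩
      have : coneD0 x c (ω, fun _ => -r) = koszulD x 0 ω - c • (fun _ => -r : KSp R n 0) := rfl
      rw [this, hω]
      funext t
      have ht : t = pt' := Subtype.ext (Finset.card_eq_zero.mp t.2)
      rw [ht]
      show u - c * (-r) = a pt'
      rw [← huv, ← hr]
      ring
  exact ⟨(Submodule.quotEquivOfEq _ _ hker).trans (F.quotKerEquivOfSurjective hFsurj)⟩

end Parts
section PartII

variable {R : Type*} [CommRing R] {n : ℕ}

lemma partII (x : Fin n → R) (c : R) (hn : 1 ≤ n)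
    (hreg : ∀ i : Fin n, (i : ℕ) < n - 1 → ∀ r : R,
      r * x i ∈ Ideal.span (x '' {j : Fin n | (j : ℕ) < (i : ℕ)}) →
      r ∈ Ideal.span (x '' {j : Fin n | (j : ℕ) < (i : ℕ)})) :
    Nonempty ((↥(LinearMap.ker (coneDsucc x c 0)) ⧸
        (LinearMap.range (coneDsucc x c 1)).comap (LinearMap.ker (coneDsucc x c 0)).subtype)
      ≃ₗ[R]
      ↥(LinearMap.ker (LinearMap.mulLeft R
          (Ideal.Quotient.mk (Ideal.span (x '' {j : Fin n | (j : ℕ) < n - 1}))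
            (x ⟨n - 1, Nat.sub_lt hn Nat.one_pos⟩))) ⊓
        LinearMap.ker (LinearMap.mulLeft R
          (Ideal.Quotient.mk (Ideal.span (x '' {j : Fin n | (j : ℕ) < n - 1})) c)))) := by
  have hsign : ((-1 : R) ^ (0 + 2) * c) = c := by norm_num
  have hsign3 : ((-1 : R) ^ (1 + 2) * c) = -c := by norm_num
  set S : Submodule R (R ⧸ Ideal.span (x '' {j : Fin n | (j : ℕ) < n - 1})) :=
    LinearMap.ker (LinearMap.mulLeft R
        (Ideal.Quotient.mk (Ideal.span (x '' {j : Fin n | (j : ℕ) < n - 1}))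
          (x ⟨n - 1, Nat.sub_lt hn Nat.one_pos⟩))) ⊓
      LinearMap.ker (LinearMap.mulLeft R
        (Ideal.Quotient.mk (Ideal.span (x '' {j : Fin n | (j : ℕ) < n - 1})) c)) with hS
  set f : ↥(LinearMap.ker (coneDsucc x c 0)) →ₗ[R]
      R ⧸ Ideal.span (x '' {j : Fin n | (j : ℕ) < n - 1}) :=
    (Ideal.span (x '' {j : Fin n | (j : ℕ) < n - 1})).mkQ.comp
      ((LinearMap.proj (⟨{⟨n - 1, Nat.sub_lt hn Nat.one_pos⟩}, by simp⟩ :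
          {s : Finset (Fin n) // s.card = 1})).comp
        ((LinearMap.snd R _ _).comp (LinearMap.ker (coneDsucc x c 0)).subtype)) with hf
  have hfval : ∀ p : ↥(LinearMap.ker (coneDsucc x c 0)),
      f p = Ideal.Quotient.mk (Ideal.span (x '' {j : Fin n | (j : ℕ) < n - 1}))
        ((p.1).2 ⟨{⟨n - 1, Nat.sub_lt hn Nat.one_pos⟩}, by simp⟩) := fun p => rfl
  have hcyc : ∀ p : ↥(LinearMap.ker (coneDsucc x c 0)),
      koszulD x 1 (p.1).1 + c • (p.1).2 = 0 ∧ koszulD x 0 (p.1).2 = 0 := by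
    intro p
    have hp : coneDsucc x c 0 p.1 = 0 := p.2
    have h1 : koszulD x 1 (p.1).1 + ((-1 : R) ^ (0 + 2) * c) • (p.1).2 = 0 :=
      congrArg Prod.fst hp
    have h2 : koszulD x 0 (p.1).2 = 0 := congrArg Prod.snd hp
    rw [hsign] at h1
    exact ⟨h1, h2⟩
  have hfS : ∀ p : ↥(LinearMap.ker (coneDsucc x c 0)), f p ∈ S := by
    intro p
    obtain ⟨h1, h2⟩ := hcyc p
    rw [hfval p]
    refine Submodule.mem_inf.mpr ⟨LinearMap.mem_ker.mpr ?_, LinearMap.mem_ker.mpr ?_⟩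
    · rw [LinearMap.mulLeft_apply, ← map_mul, Ideal.Quotient.eq_zero_iff_mem]
      exact cycle_last_ann x hn _ h2
    · rw [LinearMap.mulLeft_apply, ← map_mul, Ideal.Quotient.eq_zero_iff_mem]
      have h3 : koszulD x 1 (p.1).1 ⟨{⟨n - 1, Nat.sub_lt hn Nat.one_pos⟩}, by simp⟩ +
          c * (p.1).2 ⟨{⟨n - 1, Nat.sub_lt hn Nat.one_pos⟩}, by simp⟩ = 0 :=
        congrFun h1 _
      have hv : c * (p.1).2 ⟨{⟨n - 1, Nat.sub_lt hn Nat.one_pos⟩}, by simp⟩ =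
          -(koszulD x 1 (p.1).1 ⟨{⟨n - 1, Nat.sub_lt hn Nat.one_pos⟩}, by simp⟩) := by
        linear_combination h3
      rw [hv]
      exact Submodule.neg_mem _ (boundary_last x hn _)
  have hsurj : Function.Surjective (LinearMap.codRestrict S f hfS) := by
    rintro ⟨z, hz1, hz2⟩
    obtain ⟨r, hr⟩ := Ideal.Quotient.mk_surjective z
    have hxr : x ⟨n - 1, Nat.sub_lt hn Nat.one_pos⟩ * r ∈
        Ideal.span (x '' {j : Fin n | (j : ℕ) < n - 1}) := by
      rw [← Ideal.Quotient.eq_zero_iff_mem, map_mul, hr]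
      exact hz1
    have hcr : c * r ∈ Ideal.span (x '' {j : Fin n | (j : ℕ) < n - 1}) := by
      rw [← Ideal.Quotient.eq_zero_iff_mem, map_mul, hr]
      exact hz2
    obtain ⟨η, hη0, hηl⟩ := exists_cycle_last x hn r hxr
    have hcη0 : koszulD x 0 (c • η) = 0 := by rw [map_smul, hη0, smul_zero]
    have hcηl : (c • η) ⟨{⟨n - 1, Nat.sub_lt hn Nat.one_pos⟩}, by simp⟩ ∈
        Ideal.span (x '' {j : Fin n | (j : ℕ) < n - 1}) := by
      show c * η ⟨{⟨n - 1, Nat.sub_lt hn Nat.one_pos⟩}, by simp⟩ ∈ _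
      rw [hηl]
      exact hcr
    obtain ⟨ξ, hξ⟩ := cycle_exact_of_last x hn hreg (c • η) hcη0 hcηl
    have hmemker : coneDsucc x c 0 (-ξ, η) = 0 := by
      refine Prod.ext ?_ ?_
      · show koszulD x 1 (-ξ) + ((-1 : R) ^ (0 + 2) * c) • η = 0
        rw [hsign, map_neg, hξ, neg_add_cancel]
      · exact hη0
    refine ⟨⟨(-ξ, η), LinearMap.mem_ker.mpr hmemker⟩, ?_⟩
    apply Subtype.ext
    show Ideal.Quotient.mk (Ideal.span (x '' {j : Fin n | (j : ℕ) < n - 1}))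
      (η ⟨{⟨n - 1, Nat.sub_lt hn Nat.one_pos⟩}, by simp⟩) = z
    rw [hηl, hr]
  have hker : LinearMap.ker (LinearMap.codRestrict S f hfS) =
      (LinearMap.range (coneDsucc x c 1)).comap
        (LinearMap.ker (coneDsucc x c 0)).subtype := by
    rw [LinearMap.ker_codRestrict]
    ext p
    simp only [LinearMap.mem_ker, Submodule.mem_comap, LinearMap.mem_range]
    constructor
    · intro hp0
      obtain ⟨h1, h2⟩ := hcyc p
      have hmeml : (p.1).2 ⟨{⟨n - 1, Nat.sub_lt hn Nat.one_pos⟩}, by simp⟩ ∈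
          Ideal.span (x '' {j : Fin n | (j : ℕ) < n - 1}) := by
        rw [← Ideal.Quotient.eq_zero_iff_mem]
        rw [hfval p] at hp0
        exact hp0
      obtain ⟨ξ, hξ⟩ := cycle_exact_of_last x hn hreg (p.1).2 h2 hmeml
      have hcycnew : koszulD x 1 ((p.1).1 + c • ξ) = 0 := by
        rw [map_add, map_smul, hξ]
        exact h1
      obtain ⟨ζ, hζ⟩ := isEx_K x hn hreg 0 _ hcycnew
      have hζ' : koszulD x 2 ζ = (p.1).1 + c • ξ := hζ
      refine ⟨(ζ, ξ), ?_⟩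
      refine Prod.ext ?_ ?_
      · show koszulD x 2 ζ + ((-1 : R) ^ (1 + 2) * c) • ξ = (p.1).1
        rw [hsign3, hζ', neg_smul]
        exact add_neg_cancel_right _ _
      · exact hξ
    · rintro ⟨q, hq⟩
      have h2 : koszulD x 1 q.2 = (p.1).2 := congrArg Prod.snd hq
      rw [hfval p, Ideal.Quotient.eq_zero_iff_mem, ← h2]
      exact boundary_last x hn _
  exact ⟨(Submodule.quotEquivOfEq _ _ hker.symm).trans
    (LinearMap.quotKerEquivOfSurjective _ hsurj)⟩

end PartII
section PartIII

/-- The ideal `(x₁,…,x_{n-1})`. -/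
noncomputable abbrev IXid {R : Type*} [CommRing R] {n : ℕ} (x : Fin n → R) : Ideal R :=
  Ideal.span (x '' {j : Fin n | (j : ℕ) < n - 1})

/-- `ann_{B'}(xₙ)`. -/
noncomputable abbrev annXS {R : Type*} [CommRing R] {n : ℕ} (x : Fin n → R) (hn : 1 ≤ n) :
    Submodule R (R ⧸ IXid x) :=
  LinearMap.ker (LinearMap.mulLeft R
    (Ideal.Quotient.mk (IXid x) (x ⟨n - 1, Nat.sub_lt hn Nat.one_pos⟩)))

/-- `ann_B(c)`. -/
noncomputable abbrev annBcS {R : Type*} [CommRing R] {n : ℕ} (x : Fin n → R) (c : R) :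
    Submodule R (R ⧸ Ideal.span (Set.range x)) :=
  LinearMap.ker (LinearMap.mulLeft R (Ideal.Quotient.mk (Ideal.span (Set.range x)) c))

/-- `c · ann_{B'}(xₙ)` as a submodule of `ann_{B'}(xₙ)`. -/
noncomputable abbrev cAnnXS {R : Type*} [CommRing R] {n : ℕ} (x : Fin n → R) (c : R)
    (hn : 1 ≤ n) : Submodule R ↥(annXS x hn) :=
  (Submodule.map (LinearMap.mulLeft R (Ideal.Quotient.mk (IXid x) c))
    (annXS x hn)).comap (annXS x hn).subtype

variable {k : Type*} [Field k] {R : Type*} [CommRing R] [Algebra k R] {n : ℕ}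

set_option maxHeartbeats 2000000 in
set_option synthInstance.maxHeartbeats 400000 in
lemma partIII (x : Fin n → R) (c : R) (hn : 1 ≤ n)
    (hreg : ∀ i : Fin n, (i : ℕ) < n - 1 → ∀ r : R,
      r * x i ∈ Ideal.span (x '' {j : Fin n | (j : ℕ) < (i : ℕ)}) →
      r ∈ Ideal.span (x '' {j : Fin n | (j : ℕ) < (i : ℕ)})) :
    Nonempty ((↥(LinearMap.ker (coneD0 x c)) ⧸
        (LinearMap.range (coneDsucc x c 0)).comap (LinearMap.ker (coneD0 x c)).subtype)
      ≃ₗ[k]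
      ((↥(annXS x hn) ⧸ cAnnXS x c hn) × ↥(annBcS x c))) := by
  have hsign : ((-1 : R) ^ (0 + 2) * c) = c := by norm_num
  -- the map `G : Z → ann_B(c)`
  have hGmem : ∀ z : ↥(LinearMap.ker (coneD0 x c)),
      ((Ideal.span (Set.range x)).mkQ.comp ((LinearMap.proj
          (⟨∅, rfl⟩ : {s : Finset (Fin n) // s.card = 0})).comp
        ((LinearMap.snd R _ _).comp (LinearMap.ker (coneD0 x c)).subtype))) z ∈
        annBcS x c := by
    intro z
    refine LinearMap.mem_ker.mpr ?_
    rw [LinearMap.mulLeft_apply]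
    show Ideal.Quotient.mk (Ideal.span (Set.range x)) c *
      Ideal.Quotient.mk (Ideal.span (Set.range x)) ((z.1).2 ⟨∅, rfl⟩) = 0
    rw [← map_mul, Ideal.Quotient.eq_zero_iff_mem]
    have hz : koszulD x 0 (z.1).1 - c • (z.1).2 = 0 := z.2
    have hz' : koszulD x 0 (z.1).1 ⟨∅, rfl⟩ - c * (z.1).2 ⟨∅, rfl⟩ = 0 := congrFun hz _
    have he : c * (z.1).2 ⟨∅, rfl⟩ = koszulD x 0 (z.1).1 ⟨∅, rfl⟩ := by linear_combination -hz'
    rw [he]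
    exact (mem_range_koszulD0 x _).mp ⟨(z.1).1, rfl⟩
  let G : ↥(LinearMap.ker (coneD0 x c)) →ₗ[R] ↥(annBcS x c) :=
    LinearMap.codRestrict (annBcS x c) _ hGmem
  have hbd : (LinearMap.range (coneDsucc x c 0)).comap
      (LinearMap.ker (coneD0 x c)).subtype ≤ LinearMap.ker G := by
    intro z hz
    obtain ⟨q, hq⟩ := Submodule.mem_comap.mp hz
    refine LinearMap.mem_ker.mpr (Subtype.ext ?_)
    show Ideal.Quotient.mk (Ideal.span (Set.range x)) ((z.1).2 ⟨∅, rfl⟩) = 0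
    rw [Ideal.Quotient.eq_zero_iff_mem]
    have h2 : koszulD x 0 q.2 = (z.1).2 := congrArg Prod.snd hq
    rw [← h2]
    exact (mem_range_koszulD0 x _).mp ⟨q.2, rfl⟩
  let gbar : (↥(LinearMap.ker (coneD0 x c)) ⧸
      (LinearMap.range (coneDsucc x c 0)).comap (LinearMap.ker (coneD0 x c)).subtype)
      →ₗ[R] ↥(annBcS x c) :=
    Submodule.liftQ _ G hbd
  have hgsurj : Function.Surjective gbar := by
    intro w
    obtain ⟨r, hr⟩ := Ideal.Quotient.mk_surjective w.1
    have hcr : c * r ∈ Ideal.span (Set.range x) := by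
      rw [← Ideal.Quotient.eq_zero_iff_mem, map_mul, hr]
      exact LinearMap.mem_ker.mp w.2
    obtain ⟨ω₀, hω₀⟩ := (mem_range_koszulD0 x (fun _ => c * r)).mpr (by exact hcr)
    have hmemz : coneD0 x c (ω₀, fun _ => r) = 0 := by
      show koszulD x 0 ω₀ - c • (fun _ => r : KSp R n 0) = 0
      rw [hω₀]
      funext t
      show c * r - c * r = 0
      ring
    refine ⟨Submodule.Quotient.mk ⟨(ω₀, fun _ => r), LinearMap.mem_ker.mpr hmemz⟩, ?_⟩
    apply Subtype.ext
    show Ideal.Quotient.mk (Ideal.span (Set.range x)) r = w.1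
    exact hr
  -- the map `J : Z₁(K) → H₁(cone)`
  have hmemJ : ∀ ω : ↥(LinearMap.ker (koszulD x 0)),
      ((ω : KSp R n 1), (0 : KSp R n 0)) ∈ LinearMap.ker (coneD0 x c) := by
    intro ω
    refine LinearMap.mem_ker.mpr ?_
    show koszulD x 0 ω.1 - c • (0 : KSp R n 0) = 0
    rw [LinearMap.mem_ker.mp ω.2, smul_zero, sub_zero]
  let J : ↥(LinearMap.ker (koszulD x 0)) →ₗ[R]
      (↥(LinearMap.ker (coneD0 x c)) ⧸
        (LinearMap.range (coneDsucc x c 0)).comap (LinearMap.ker (coneD0 x c)).subtype) :=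
    ((LinearMap.range (coneDsucc x c 0)).comap
        (LinearMap.ker (coneD0 x c)).subtype).mkQ.comp
      (LinearMap.codRestrict (LinearMap.ker (coneD0 x c))
        (LinearMap.prod (LinearMap.ker (koszulD x 0)).subtype 0) (fun ω => hmemJ ω))
  have hrange : LinearMap.range J = LinearMap.ker gbar := by
    ext v
    constructor
    · rintro ⟨ω, rfl⟩
      refine LinearMap.mem_ker.mpr (Subtype.ext ?_)
      show Ideal.Quotient.mk (Ideal.span (Set.range x)) ((0 : KSp R n 0) ⟨∅, rfl⟩) = 0
      rw [show ((0 : KSp R n 0) ⟨∅, rfl⟩) = 0 from rfl, map_zero]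
    · intro hv
      obtain ⟨z, rfl⟩ := Submodule.mkQ_surjective _ v
      have hGz : G z = 0 := LinearMap.mem_ker.mp hv
      have hz2mem : (z.1).2 ⟨∅, rfl⟩ ∈ Ideal.span (Set.range x) := by
        rw [← Ideal.Quotient.eq_zero_iff_mem]
        exact congrArg Subtype.val hGz
      obtain ⟨ξ, hξ⟩ := (mem_range_koszulD0 x (z.1).2).mpr hz2mem
      have hzcyc : koszulD x 0 (z.1).1 - c • (z.1).2 = 0 := z.2
      have hωmem : koszulD x 0 ((z.1).1 - c • ξ) = 0 := by
        rw [map_sub, map_smul, hξ]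
        exact hzcyc
      refine ⟨⟨(z.1).1 - c • ξ, LinearMap.mem_ker.mpr hωmem⟩, ?_⟩
      have key : (⟨((z.1).1 - c • ξ, (0 : KSp R n 0)),
          hmemJ ⟨(z.1).1 - c • ξ, LinearMap.mem_ker.mpr hωmem⟩⟩ :
            ↥(LinearMap.ker (coneD0 x c))) - z ∈
          (LinearMap.range (coneDsucc x c 0)).comap
            (LinearMap.ker (coneD0 x c)).subtype := by
        refine Submodule.mem_comap.mpr ⟨((0 : KSp R n 2), -ξ), ?_⟩
        refine Prod.ext ?_ ?_
        · show koszulD x 1 0 + ((-1 : R) ^ (0 + 2) * c) • (-ξ) =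
            ((z.1).1 - c • ξ) - (z.1).1
          rw [hsign, map_zero, zero_add, smul_neg]
          abel
        · show koszulD x 0 (-ξ) = (0 : KSp R n 0) - (z.1).2
          rw [map_neg, hξ, zero_sub]
      exact (Submodule.Quotient.eq _).mpr key
  -- the map `Fq : Z₁(K) → ann_{B'}(xₙ)/c·ann`
  have hF'mem : ∀ ω : ↥(LinearMap.ker (koszulD x 0)),
      ((IXid x).mkQ.comp ((LinearMap.proj
          (⟨{⟨n - 1, Nat.sub_lt hn Nat.one_pos⟩}, by simp⟩ :
            {s : Finset (Fin n) // s.card = 1})).comp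
        (LinearMap.ker (koszulD x 0)).subtype)) ω ∈ annXS x hn := by
    intro ω
    refine LinearMap.mem_ker.mpr ?_
    rw [LinearMap.mulLeft_apply]
    show Ideal.Quotient.mk (IXid x) (x ⟨n - 1, Nat.sub_lt hn Nat.one_pos⟩) *
      Ideal.Quotient.mk (IXid x)
        (ω.1 ⟨{⟨n - 1, Nat.sub_lt hn Nat.one_pos⟩}, by simp⟩) = 0
    rw [← map_mul, Ideal.Quotient.eq_zero_iff_mem]
    exact cycle_last_ann x hn _ (LinearMap.mem_ker.mp ω.2)
  let Fc : ↥(LinearMap.ker (koszulD x 0)) →ₗ[R] ↥(annXS x hn) :=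
    LinearMap.codRestrict (annXS x hn) _ hF'mem
  let Fq : ↥(LinearMap.ker (koszulD x 0)) →ₗ[R] (↥(annXS x hn) ⧸ cAnnXS x c hn) :=
    (cAnnXS x c hn).mkQ.comp Fc
  have hFcsurj : Function.Surjective Fc := by
    intro w
    obtain ⟨r, hr⟩ := Ideal.Quotient.mk_surjective w.1
    have hxr : x ⟨n - 1, Nat.sub_lt hn Nat.one_pos⟩ * r ∈ IXid x := by
      rw [← Ideal.Quotient.eq_zero_iff_mem, map_mul, hr]
      exact LinearMap.mem_ker.mp w.2
    obtain ⟨η, hη0, hηl⟩ := exists_cycle_last x hn r hxr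
    refine ⟨⟨η, LinearMap.mem_ker.mpr hη0⟩, Subtype.ext ?_⟩
    show Ideal.Quotient.mk (IXid x)
      (η ⟨{⟨n - 1, Nat.sub_lt hn Nat.one_pos⟩}, by simp⟩) = w.1
    rw [hηl, hr]
  have hFqsurj : Function.Surjective Fq := by
    intro w
    obtain ⟨w', rfl⟩ := Submodule.mkQ_surjective _ w
    obtain ⟨ω, hω⟩ := hFcsurj w'
    exact ⟨ω, by show (cAnnXS x c hn).mkQ (Fc ω) = _; rw [hω]⟩
  have hkerJFq : LinearMap.ker J = LinearMap.ker Fq := by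
    ext ω
    simp only [LinearMap.mem_ker]
    constructor
    · intro hJ
      have hmem : (⟨((ω : KSp R n 1), (0 : KSp R n 0)), hmemJ ω⟩ :
          ↥(LinearMap.ker (coneD0 x c))) ∈
          (LinearMap.range (coneDsucc x c 0)).comap
            (LinearMap.ker (coneD0 x c)).subtype :=
        (Submodule.Quotient.mk_eq_zero _).mp hJ
      obtain ⟨q, hq⟩ := Submodule.mem_comap.mp hmem
      have hfst : koszulD x 1 q.1 + ((-1 : R) ^ (0 + 2) * c) • q.2 = ω.1 :=
        congrArg Prod.fst hq
      rw [hsign] at hfst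
      have hsnd : koszulD x 0 q.2 = (0 : KSp R n 0) := congrArg Prod.snd hq
      refine (Submodule.Quotient.mk_eq_zero _).mpr ?_
      refine Submodule.mem_comap.mpr (Submodule.mem_map.mpr ?_)
      refine ⟨Ideal.Quotient.mk (IXid x)
        (q.2 ⟨{⟨n - 1, Nat.sub_lt hn Nat.one_pos⟩}, by simp⟩), ?_, ?_⟩
      · refine LinearMap.mem_ker.mpr ?_
        rw [LinearMap.mulLeft_apply, ← map_mul, Ideal.Quotient.eq_zero_iff_mem]
        exact cycle_last_ann x hn _ hsnd
      · rw [LinearMap.mulLeft_apply, ← map_mul]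
        show _ = Ideal.Quotient.mk (IXid x)
          (ω.1 ⟨{⟨n - 1, Nat.sub_lt hn Nat.one_pos⟩}, by simp⟩)
        rw [Ideal.Quotient.eq]
        have hv : koszulD x 1 q.1 ⟨{⟨n - 1, Nat.sub_lt hn Nat.one_pos⟩}, by simp⟩ +
            c * q.2 ⟨{⟨n - 1, Nat.sub_lt hn Nat.one_pos⟩}, by simp⟩ =
            ω.1 ⟨{⟨n - 1, Nat.sub_lt hn Nat.one_pos⟩}, by simp⟩ := congrFun hfst _
        have hv2 : c * q.2 ⟨{⟨n - 1, Nat.sub_lt hn Nat.one_pos⟩}, by simp⟩ -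
            ω.1 ⟨{⟨n - 1, Nat.sub_lt hn Nat.one_pos⟩}, by simp⟩ =
            -(koszulD x 1 q.1 ⟨{⟨n - 1, Nat.sub_lt hn Nat.one_pos⟩}, by simp⟩) := by
          linear_combination hv
        rw [hv2]
        exact Submodule.neg_mem _ (boundary_last x hn _)
    · intro hFq
      have hmem : Fc ω ∈ cAnnXS x c hn := (Submodule.Quotient.mk_eq_zero _).mp hFq
      obtain ⟨y, hy, hyeq⟩ := Submodule.mem_map.mp (Submodule.mem_comap.mp hmem)
      obtain ⟨u, hu⟩ := Ideal.Quotient.mk_surjective y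
      have hxu : x ⟨n - 1, Nat.sub_lt hn Nat.one_pos⟩ * u ∈ IXid x := by
        rw [← Ideal.Quotient.eq_zero_iff_mem, map_mul, hu]
        exact LinearMap.mem_ker.mp hy
      obtain ⟨ξ, hξ0, hξl⟩ := exists_cycle_last x hn u hxu
      have hnew0 : koszulD x 0 (ω.1 - c • ξ) = 0 := by
        rw [map_sub, map_smul, hξ0, smul_zero, sub_zero]
        exact LinearMap.mem_ker.mp ω.2
      have hyeq' : Ideal.Quotient.mk (IXid x) c * y =
          Ideal.Quotient.mk (IXid x)
            (ω.1 ⟨{⟨n - 1, Nat.sub_lt hn Nat.one_pos⟩}, by simp⟩) := hyeq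
      have hnewl : (ω.1 - c • ξ) ⟨{⟨n - 1, Nat.sub_lt hn Nat.one_pos⟩}, by simp⟩ ∈
          IXid x := by
        show ω.1 ⟨{⟨n - 1, Nat.sub_lt hn Nat.one_pos⟩}, by simp⟩ -
          c * ξ ⟨{⟨n - 1, Nat.sub_lt hn Nat.one_pos⟩}, by simp⟩ ∈ IXid x
        rw [hξl, ← Ideal.Quotient.eq_zero_iff_mem, map_sub, map_mul, hu, hyeq', sub_self]
      obtain ⟨ζ, hζ⟩ := cycle_exact_of_last x hn hreg _ hnew0 hnewl
      refine (Submodule.Quotient.mk_eq_zero _).mpr ?_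
      refine Submodule.mem_comap.mpr ⟨(ζ, ξ), ?_⟩
      refine Prod.ext ?_ ?_
      · show koszulD x 1 ζ + ((-1 : R) ^ (0 + 2) * c) • ξ = ω.1
        rw [hsign, hζ]
        abel
      · exact hξ0
  -- the `R`-linear identification of `ker gbar`
  let e2R : ↥(LinearMap.ker gbar) ≃ₗ[R] (↥(annXS x hn) ⧸ cAnnXS x c hn) :=
    (((LinearEquiv.ofEq _ _ hrange).symm.trans
      (LinearMap.quotKerEquivRange J).symm).trans
        (Submodule.quotEquivOfEq _ _ hkerJFq)).trans
      (LinearMap.quotKerEquivOfSurjective Fq hFqsurj)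
  -- `k`-linear splitting
  let gk := LinearMap.restrictScalars k gbar
  have hgksurj : Function.Surjective gk := hgsurj
  obtain ⟨s, hs⟩ := Module.projective_lifting_property gk LinearMap.id hgksurj
  have hsv : ∀ w, gk (s w) = w := fun w => LinearMap.congr_fun hs w
  let kerK := (LinearMap.ker gbar).restrictScalars k
  let pr : (↥(LinearMap.ker (coneD0 x c)) ⧸
      (LinearMap.range (coneDsucc x c 0)).comap (LinearMap.ker (coneD0 x c)).subtype) →ₗ[k]
      (↥(LinearMap.ker (coneD0 x c)) ⧸
      (LinearMap.range (coneDsucc x c 0)).comap (LinearMap.ker (coneD0 x c)).subtype) :=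
    LinearMap.id - s ∘ₗ gk
  have hmem1 : ∀ v, pr v ∈ kerK := by
    intro v
    show gbar (v - s (gk v)) = 0
    rw [map_sub]
    have h1 : gbar (s (gk v)) = gk v := hsv (gk v)
    rw [h1]
    show gk v - gk v = 0
    rw [sub_self]
  let fwd := LinearMap.prod (LinearMap.codRestrict kerK pr hmem1) gk
  let bwd := kerK.subtype.comp (LinearMap.fst k _ _) + s.comp (LinearMap.snd k _ _)
  have h1 : fwd.comp bwd = LinearMap.id := by
    apply LinearMap.ext
    rintro ⟨z, w⟩
    have hz : gk z.1 = 0 := z.2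
    refine Prod.ext (Subtype.ext ?_) ?_
    · show (z.1 + s w) - s (gk (z.1 + s w)) = z.1
      have hgw : gk (z.1 + s w) = w := by rw [map_add, hz, zero_add, hsv]
      rw [hgw, add_sub_cancel_right]
    · show gk (z.1 + s w) = w
      rw [map_add, hz, zero_add, hsv]
  have h2 : bwd.comp fwd = LinearMap.id := by
    apply LinearMap.ext
    intro v
    show (v - s (gk v)) + s (gk v) = v
    rw [sub_add_cancel]
  let eKK : ↥kerK ≃ₗ[k] ↥(LinearMap.ker gbar) :=
    { toFun := fun v => ⟨v.1, v.2⟩,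
      map_add' := fun _ _ => rfl,
      map_smul' := fun _ _ => rfl,
      invFun := fun v => ⟨v.1, v.2⟩,
      left_inv := fun _ => rfl,
      right_inv := fun _ => rfl }
  let e1 : (↥(LinearMap.ker (coneD0 x c)) ⧸
      (LinearMap.range (coneDsucc x c 0)).comap (LinearMap.ker (coneD0 x c)).subtype)
      ≃ₗ[k] ↥kerK × ↥(annBcS x c) :=
    LinearEquiv.ofLinear fwd bwd h1 h2
  exact ⟨e1.trans
    (LinearEquiv.prodCongr (eKK.trans (LinearEquiv.restrictScalars k e2R))
      (LinearEquiv.refl k _))⟩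

end PartIII

set_option maxHeartbeats 2000000 in
set_option synthInstance.maxHeartbeats 400000 in
/-- Homology of the mapping cone `𝓑` of `·c : K(x) → K(x)`:
(i) `H_k(𝓑) = 0` for `k ≥ 3`;
(ii) `H_2(𝓑) ≅ ann_{B'}(xₙ) ∩ ann_{B'}(c)` as `R`-modules;
(iii) `H_1(𝓑) ≅ ann_{B'}(xₙ)/(c·ann_{B'}(xₙ)) ⊕ ann_B(c)` as `k`-vector spaces;
(iv) `H_0(𝓑) ≅ B/(c)`. -/
theorem mapping_cone_homology
    (k : Type*) [Field k] {R : Type*} [CommRing R] [Algebra k R]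
    (n : ℕ) (hn : 2 ≤ n) (x : Fin n → R) (c : R)
    (hreg : ∀ i : Fin n, (i : ℕ) < n - 1 → ∀ r : R,
      r * x i ∈ Ideal.span (x '' {j : Fin n | (j : ℕ) < (i : ℕ)}) →
      r ∈ Ideal.span (x '' {j : Fin n | (j : ℕ) < (i : ℕ)})) :
    -- (i) `H_k(𝓑) = 0` for `k = (j+1) + 2 ≥ 3`
    (∀ j : ℕ, 1 ≤ j → ∀ p : KSp R n (j + 2) × KSp R n (j + 1), coneDsucc x c j p = 0 →
      ∃ q : KSp R n (j + 3) × KSp R n (j + 2), coneDsucc x c (j + 1) q = p) ∧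
    -- (ii) `H_2(𝓑) ≅ ann_{B'}(xₙ) ⊓ ann_{B'}(c)`
    Nonempty ((↥(LinearMap.ker (coneDsucc x c 0)) ⧸
        (LinearMap.range (coneDsucc x c 1)).comap (LinearMap.ker (coneDsucc x c 0)).subtype)
      ≃ₗ[R]
      ↥(LinearMap.ker (LinearMap.mulLeft R
          (Ideal.Quotient.mk (Ideal.span (x '' {j : Fin n | (j : ℕ) < n - 1}))
            (x ⟨n - 1, Nat.sub_lt (Nat.lt_of_lt_of_le Nat.zero_lt_two hn) Nat.one_pos⟩))) ⊓
        LinearMap.ker (LinearMap.mulLeft R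
          (Ideal.Quotient.mk (Ideal.span (x '' {j : Fin n | (j : ℕ) < n - 1})) c)))) ∧
    -- (iii) `H_1(𝓑) ≅ ann_{B'}(xₙ)/(c·ann_{B'}(xₙ)) ⊕ ann_B(c)` as `k`-vector spaces
    Nonempty ((↥(LinearMap.ker (coneD0 x c)) ⧸
        (LinearMap.range (coneDsucc x c 0)).comap (LinearMap.ker (coneD0 x c)).subtype)
      ≃ₗ[k]
      ((↥(LinearMap.ker (LinearMap.mulLeft R
            (Ideal.Quotient.mk (Ideal.span (x '' {j : Fin n | (j : ℕ) < n - 1}))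
              (x ⟨n - 1, Nat.sub_lt (Nat.lt_of_lt_of_le Nat.zero_lt_two hn) Nat.one_pos⟩)))) ⧸
          (Submodule.map
            (LinearMap.mulLeft R
              (Ideal.Quotient.mk (Ideal.span (x '' {j : Fin n | (j : ℕ) < n - 1})) c))
            (LinearMap.ker (LinearMap.mulLeft R
              (Ideal.Quotient.mk (Ideal.span (x '' {j : Fin n | (j : ℕ) < n - 1}))
                (x ⟨n - 1, Nat.sub_lt (Nat.lt_of_lt_of_le Nat.zero_lt_two hn) Nat.one_pos⟩))))).comap
            (LinearMap.ker (LinearMap.mulLeft R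
              (Ideal.Quotient.mk (Ideal.span (x '' {j : Fin n | (j : ℕ) < n - 1}))
                (x ⟨n - 1, Nat.sub_lt (Nat.lt_of_lt_of_le Nat.zero_lt_two hn) Nat.one_pos⟩)))).subtype) ×
        ↥(LinearMap.ker (LinearMap.mulLeft R
            (Ideal.Quotient.mk (Ideal.span (Set.range x)) c))))) ∧
    -- (iv) `H_0(𝓑) ≅ B/(c)`
    Nonempty ((KSp R n 0 ⧸ LinearMap.range (coneD0 x c)) ≃ₗ[R]
      R ⧸ (Ideal.span (Set.range x) ⊔ Ideal.span {c})) := by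
  have hn1 : 1 ≤ n := le_trans one_le_two hn
  exact ⟨partI x c hn1 hreg, partII x c hn1 hreg, partIII x c hn1 hreg, partIV x c⟩
end

section
/- Multiplication by f induces a well-defined R-module isomorphism from (I : f)/(I + (c)) onto (fR ∩ I)/(fI + R·(cf)), sending the class of g to the class of gf. -/
/-- If `f` is a non-zerodivisor and `c·f ∈ I`, multiplication by `f`
induces an `R`-module isomorphism `(I : f)/(I + (c)) ≅ (fR ∩ I)/(fI + R·(cf))`,
sending the class of `g` to the class of `g·f`. -/
theorem mul_f_iso_colon_quotient {R : Type*} [CommRing R] (I : Ideal R) (f c : R)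
    (hf : ∀ a : R, a * f = 0 → a = 0) (hc : c * f ∈ I) :
    ∃ e : (↥(I.colon (Ideal.span {f})) ⧸
        (Submodule.comap (I.colon (Ideal.span {f})).subtype (I ⊔ Ideal.span {c}))) ≃ₗ[R]
      (↥(Ideal.span {f} ⊓ I) ⧸
        (Submodule.comap (Ideal.span {f} ⊓ I).subtype
          (Submodule.map (LinearMap.mulLeft R f) I ⊔ Ideal.span {c * f}))),
      ∀ g : ↥(I.colon (Ideal.span {f})),
        e (Submodule.Quotient.mk g) =
          Submodule.Quotient.mk ⟨g.1 * f, by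
            refine Submodule.mem_inf.mpr ⟨?_, ?_⟩
            · exact Ideal.mem_span_singleton.mpr (Dvd.intro_left _ rfl)
            · simpa [smul_eq_mul] using
                Submodule.mem_colon.mp g.2 f (Submodule.mem_span_singleton_self f)⟩ := by
  set N := I.colon (Ideal.span {f})
  set M := Ideal.span {f} ⊓ I
  set T : Submodule R R := Submodule.map (LinearMap.mulLeft R f) I ⊔ Ideal.span {c * f}
  set K := Submodule.comap N.subtype (I ⊔ Ideal.span {c})
  set K' := Submodule.comap M.subtype T
  have hmem : ∀ g : N, g.1 * f ∈ M := fun g => by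
    refine Submodule.mem_inf.mpr ⟨?_, ?_⟩
    · exact Ideal.mem_span_singleton.mpr (Dvd.intro_left _ rfl)
    · simpa [smul_eq_mul] using
        Submodule.mem_colon.mp g.2 f (Submodule.mem_span_singleton_self f)
  let φ : N →ₗ[R] M := LinearMap.codRestrict M ((LinearMap.mulRight R f).comp N.subtype) hmem
  let ψ : N →ₗ[R] (M ⧸ K') := K'.mkQ.comp φ
  have key : ∀ g : N, g ∈ K ↔ g.1 * f ∈ T := by
    intro g
    constructor
    · intro hg
      obtain ⟨i, hi, y, hy, hgi⟩ := Submodule.mem_sup.mp hg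
      obtain ⟨r, rfl⟩ := Ideal.mem_span_singleton.mp hy
      refine Submodule.mem_sup.mpr ⟨f * i, ⟨i, hi, rfl⟩, r * (c * f),
        Ideal.mem_span_singleton.mpr ⟨r, mul_comm _ _⟩, ?_⟩
      have hgi' : i + c * r = (g : R) := hgi
      linear_combination f * hgi'
    · intro hg
      obtain ⟨x, hx, y, hy, hxy⟩ := Submodule.mem_sup.mp hg
      obtain ⟨i, hi, rfl⟩ := hx
      obtain ⟨r, rfl⟩ := Ideal.mem_span_singleton.mp hy
      have : (g.1 - i - c * r) * f = 0 := by
        have := hxy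
        simp only [LinearMap.mulLeft_apply] at this
        ring_nf
        ring_nf at this
        linear_combination -this
      have h0 : g.1 = i + c * r := by
        have h1 := hf _ this
        linear_combination h1
      exact Submodule.mem_sup.mpr ⟨i, hi, c * r, Ideal.mem_span_singleton.mpr ⟨r, rfl⟩, h0.symm⟩
  have hK : K ≤ LinearMap.ker ψ := by
    intro g hg
    simp only [ψ, LinearMap.mem_ker, LinearMap.comp_apply, Submodule.mkQ_apply,
      Submodule.Quotient.mk_eq_zero]
    exact (key g).mp hg
  have hK2 : LinearMap.ker ψ ≤ K := by
    intro g hg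
    simp only [ψ, LinearMap.mem_ker, LinearMap.comp_apply, Submodule.mkQ_apply,
      Submodule.Quotient.mk_eq_zero] at hg
    exact (key g).mpr hg
  have hsurj : Function.Surjective (Submodule.liftQ K ψ hK) := by
    intro x
    obtain ⟨⟨m, hm⟩, rfl⟩ := Submodule.mkQ_surjective K' x
    obtain ⟨hm1, hm2⟩ := Submodule.mem_inf.mp hm
    obtain ⟨a, rfl⟩ := Ideal.mem_span_singleton.mp hm1
    have ha : a ∈ N := by
      refine Submodule.mem_colon.mpr fun p hp => ?_
      obtain ⟨s, rfl⟩ := Ideal.mem_span_singleton.mp hp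
      rw [smul_eq_mul, show a * (f * s) = s * (f * a) by ring]
      exact I.mul_mem_left s hm2
    refine ⟨Submodule.Quotient.mk ⟨a, ha⟩, ?_⟩
    rw [Submodule.liftQ_apply]
    simp only [ψ, LinearMap.comp_apply, Submodule.mkQ_apply]
    congr 1
    ext
    simp [φ, mul_comm]
    exact mul_comm a f
  have hinj : Function.Injective (Submodule.liftQ K ψ hK) := by
    rw [← LinearMap.ker_eq_bot]
    exact Submodule.ker_liftQ_eq_bot K ψ hK hK2
  refine ⟨LinearEquiv.ofBijective (Submodule.liftQ K ψ hK) ⟨hinj, hsurj⟩, fun g => ?_⟩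
  rfl
end

section
/- If h ∈ R satisfies h·X_n ∈ I_{n−1} and h ∈ (f, f_n), then there exists ω = (ω_1,…,ω_n) ∈ R^n such that ω_n = h, Σ_{i=1}^n ω_i X_i = 0, and ω ∈ f·R^n + R·(f_1,…,f_n) (i.e. ω = f·v + s·(f_1,…,f_n) for some v ∈ R^n and s ∈ R). -/
/-- If `Σ Xᵢ fᵢ = c·f`, `f` is a non-zerodivisor modulo
`I_{n−1} = (X_1,…,X_{n−1})`, `h·Xₙ ∈ I_{n−1}` and `h ∈ (f, fₙ)`, then there is a
syzygy `ω` of `X` with last entry `h` lying in `f·Rⁿ + R·(f_1,…,f_n)`. -/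
theorem syzygy_lift_of_tangent {R : Type*} [CommRing R] (n : ℕ) (hn : 2 ≤ n)
    (X : Fin n → R) (f : R) (fd : Fin n → R) (c : R)
    (htan : ∑ i, X i * fd i = c * f)
    (hreg : ∀ r : R, r * f ∈ Ideal.span (X '' {j : Fin n | (j : ℕ) < n - 1}) →
      r ∈ Ideal.span (X '' {j : Fin n | (j : ℕ) < n - 1}))
    (h : R)
    (hX : h * X ⟨n - 1, Nat.sub_lt (Nat.lt_of_lt_of_le Nat.zero_lt_two hn) Nat.one_pos⟩ ∈
      Ideal.span (X '' {j : Fin n | (j : ℕ) < n - 1}))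
    (hfn : h ∈ Ideal.span
      ({f, fd ⟨n - 1, Nat.sub_lt (Nat.lt_of_lt_of_le Nat.zero_lt_two hn) Nat.one_pos⟩} :
        Set R)) :
    ∃ ω : Fin n → R,
      ω ⟨n - 1, Nat.sub_lt (Nat.lt_of_lt_of_le Nat.zero_lt_two hn) Nat.one_pos⟩ = h ∧
      ∑ i, ω i * X i = 0 ∧
      ∃ (v : Fin n → R) (s : R), ω = f • v + s • fd := by
  set L : Fin n := ⟨n - 1, Nat.sub_lt (Nat.lt_of_lt_of_le Nat.zero_lt_two hn) Nat.one_pos⟩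
    with hL
  set I : Ideal R := Ideal.span (X '' {j : Fin n | (j : ℕ) < n - 1}) with hI
  obtain ⟨a, b, hab⟩ := Ideal.mem_span_pair.mp hfn
  have hne : ∀ i : Fin n, i ≠ L → (i : ℕ) < n - 1 := by
    intro i hi
    have h1 : (i : ℕ) < n := i.isLt
    have h2 : (i : ℕ) ≠ n - 1 := fun hc => hi (Fin.ext hc)
    omega
  have hsplit : ∑ i, X i * fd i = X L * fd L + ∑ i ∈ Finset.univ.erase L, X i * fd i :=
    (Finset.add_sum_erase _ _ (Finset.mem_univ L)).symm
  have hS : ∑ i ∈ Finset.univ.erase L, X i * fd i ∈ I := by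
    refine Ideal.sum_mem _ fun i hi => ?_
    have : X i ∈ I := Ideal.subset_span ⟨i, hne i (Finset.ne_of_mem_erase hi), rfl⟩
    exact Ideal.mul_mem_right _ _ this
  have hr : a * X L + b * c ∈ I := by
    apply hreg
    have key : (a * X L + b * c) * f =
        h * X L + b * ∑ i ∈ Finset.univ.erase L, X i * fd i := by
      have h1 : c * f = X L * fd L + ∑ i ∈ Finset.univ.erase L, X i * fd i := by
        rw [← htan]; exact hsplit
      calc (a * X L + b * c) * f = a * X L * f + b * (c * f) := by ring
        _ = a * X L * f + b * (X L * fd L + ∑ i ∈ Finset.univ.erase L, X i * fd i) := by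
            rw [h1]
        _ = (a * f + b * fd L) * X L + b * ∑ i ∈ Finset.univ.erase L, X i * fd i := by ring
        _ = _ := by rw [hab]
    rw [key]
    exact Ideal.add_mem _ hX (Ideal.mul_mem_left _ _ hS)
  obtain ⟨l, hlsupp, hlc⟩ := (Finsupp.mem_span_image_iff_linearCombination R).mp hr
  have hl0 : l L = 0 := by
    by_contra hc
    have : L ∈ {j : Fin n | (j : ℕ) < n - 1} := hlsupp (Finsupp.mem_support_iff.mpr hc)
    simp only [Set.mem_setOf_eq] at this
    exact lt_irrefl _ this
  have hlsum : ∑ i, l i * X i = a * X L + b * c := by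
    rw [← hlc, Finsupp.linearCombination_apply, Finsupp.sum_fintype]
    · simp [mul_comm]
    · intro i; simp
  set v : Fin n → R := fun i => if i = L then a else -(l i) with hv
  have hvsum : ∑ i, v i * X i = -(b * c) := by
    have : ∀ i : Fin n, v i * X i = (if i = L then a * X L else 0) + -(l i) * X i := by
      intro i
      by_cases hi : i = L
      · subst hi; simp [hv, hl0]
      · simp [hv, hi]
    rw [Finset.sum_congr rfl fun i _ => this i, Finset.sum_add_distrib,
      Finset.sum_ite_eq' Finset.univ L (fun _ => a * X L)]
    simp only [Finset.mem_univ, if_true]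
    have : ∑ i, -(l i) * X i = -∑ i, l i * X i := by
      rw [← Finset.sum_neg_distrib]; exact Finset.sum_congr rfl fun i _ => by ring
    rw [this, hlsum]; ring
  refine ⟨f • v + b • fd, ?_, ?_, v, b, rfl⟩
  · have hvL : v L = a := if_pos rfl
    simp only [Pi.add_apply, Pi.smul_apply, smul_eq_mul, hvL]
    rw [← hab]; ring
  · have : ∀ i : Fin n, (f • v + b • fd) i * X i = f * (v i * X i) + b * (X i * fd i) := by
      intro i; simp only [Pi.add_apply, Pi.smul_apply, smul_eq_mul]; ring
    rw [Finset.sum_congr rfl fun i _ => this i, Finset.sum_add_distrib,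
      ← Finset.mul_sum, ← Finset.mul_sum, hvsum, htan]
    ring
end

section
/- In R = ℂ[[x,y]], the set {g ∈ R : g·f ∈ (X_1, X_2)} equals the principal ideal (x^m), where f = x²y + y^{k−1}, X_1 = ((k−2)/(2(k−1)))·x^{m+1} and X_2 = (1/(k−1))·x^m·y; equivalently, the ideal quotient (x^{m+1}, x^m y) : (x²y + y^{k−1}) equals (x^m). -/
open MvPowerSeries Finsupp

noncomputable section

private lemma single_of_zero_eq (d : Fin 2 →₀ ℕ) (h : d 0 = 0) : d = single 1 (d 1) := by
  ext t
  fin_cases t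
  · simpa [Finsupp.single_apply] using h
  · simp [Finsupp.single_apply]

private lemma X0_prime : Prime (MvPowerSeries.X (σ := Fin 2) (R := ℂ) 0) := by
  classical
  refine ⟨?_, ?_, ?_⟩
  · intro h
    have := congrArg (coeff (single (0 : Fin 2) 1)) h
    simp [coeff_X] at this
  · intro h
    have := h.map (constantCoeff (σ := Fin 2) (R := ℂ))
    rw [constantCoeff_X] at this
    simp [isUnit_zero_iff] at this
  · intro a b hab
    by_contra hcon
    push_neg at hcon
    obtain ⟨ha, hb⟩ := hcon
    rw [X_dvd_iff] at ha hb hab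
    push_neg at ha hb
    obtain ⟨da, hda0, hdaa⟩ := ha
    obtain ⟨db, hdb0, hdbb⟩ := hb
    have hA : ∃ n, coeff (single (1 : Fin 2) n) a ≠ 0 :=
      ⟨da 1, by rwa [← single_of_zero_eq da hda0]⟩
    have hB : ∃ n, coeff (single (1 : Fin 2) n) b ≠ 0 :=
      ⟨db 1, by rwa [← single_of_zero_eq db hdb0]⟩
    set na := Nat.find hA with hna
    set nb := Nat.find hB with hnb
    have key := hab (single 1 (na + nb)) (by simp [Finsupp.single_apply])
    rw [coeff_mul] at key
    rw [Finset.sum_eq_single (single (1:Fin 2) na, single (1:Fin 2) nb)] at key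
    · exact absurd key (mul_ne_zero (Nat.find_spec hA) (Nat.find_spec hB))
    · rintro ⟨i, j⟩ hij hne
      rw [Finset.HasAntidiagonal.mem_antidiagonal] at hij
      have hi0 : i 0 = 0 := by
        have := congrArg (fun d : Fin 2 →₀ ℕ => d 0) hij
        simp [Finsupp.single_apply] at this
        omega
      have hj0 : j 0 = 0 := by
        have := congrArg (fun d : Fin 2 →₀ ℕ => d 0) hij
        simp [Finsupp.single_apply] at this
        omega
      have hi : i = single 1 (i 1) := single_of_zero_eq i hi0
      have hj : j = single 1 (j 1) := single_of_zero_eq j hj0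
      have hsum : i 1 + j 1 = na + nb := by
        have := congrArg (fun d : Fin 2 →₀ ℕ => d 1) hij
        simpa using this
      rcases lt_trichotomy (i 1) na with h1 | h1 | h1
      · rw [hi, not_ne_iff.mp (Nat.find_min hA h1), zero_mul]
      · exfalso
        apply hne
        have hj1 : j 1 = nb := by omega
        rw [Prod.ext_iff]
        exact ⟨by rw [hi, h1], by rw [hj, hj1]⟩
      · have hj1 : j 1 < nb := by omega
        rw [hj, not_ne_iff.mp (Nat.find_min hB hj1), mul_zero]
    · intro h
      exact absurd (Finset.HasAntidiagonal.mem_antidiagonal.mpr (by rw [Finsupp.single_add])) h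

/-- In `R = ℂ[[x,y]]`, for the `D_k` singularity
`f = x²y + y^{k−1}` and the tangent vector field with components
`X₁ = ((k−2)/(2(k−1)))·x^{m+1}`, `X₂ = (1/(k−1))·x^m y`, one has
`{g : g·f ∈ (X₁, X₂)} = (x^m)`, i.e. `(X₁, X₂) : f = (x^m)`. -/
theorem Dk_colon_ideal (k m : ℕ) (hk : 4 ≤ k) (hm : 2 ≤ m) :
    (Ideal.span
        ({MvPowerSeries.C (σ := Fin 2) (R := ℂ) (((k : ℂ) - 2) / (2 * ((k : ℂ) - 1))) *
            MvPowerSeries.X 0 ^ (m + 1),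
          MvPowerSeries.C (σ := Fin 2) (R := ℂ) (1 / ((k : ℂ) - 1)) *
            (MvPowerSeries.X 0 ^ m * MvPowerSeries.X 1)} :
          Set (MvPowerSeries (Fin 2) ℂ))).colon
      ((Ideal.span {MvPowerSeries.X 0 ^ 2 * MvPowerSeries.X 1 +
        MvPowerSeries.X 1 ^ (k - 1)} : Ideal (MvPowerSeries (Fin 2) ℂ)) : Set (MvPowerSeries (Fin 2) ℂ)) =
    Ideal.span {MvPowerSeries.X 0 ^ m} := by
  classical
  have hk1 : ((k : ℂ) - 1) ≠ 0 := by
    intro h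
    have : (k : ℂ) = 1 := by linear_combination h
    have : k = 1 := by exact_mod_cast this
    omega
  have hk2 : ((k : ℂ) - 2) ≠ 0 := by
    intro h
    have : (k : ℂ) = 2 := by linear_combination h
    have : k = 2 := by exact_mod_cast this
    omega
  set c1 : ℂ := ((k : ℂ) - 2) / (2 * ((k : ℂ) - 1)) with hc1def
  set c2 : ℂ := 1 / ((k : ℂ) - 1) with hc2def
  have hc1 : c1 ≠ 0 := div_ne_zero hk2 (by
    intro h
    rcases mul_eq_zero.mp h with h | h
    · norm_num at h
    · exact hk1 h)
  have hc2 : c2 ≠ 0 := one_div_ne_zero hk1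
  set X0 : MvPowerSeries (Fin 2) ℂ := MvPowerSeries.X 0 with hX0
  set X1 : MvPowerSeries (Fin 2) ℂ := MvPowerSeries.X 1 with hX1
  set f : MvPowerSeries (Fin 2) ℂ := X0 ^ 2 * X1 + X1 ^ (k - 1) with hf
  have hfd : ¬ X0 ∣ f := by
    rw [hX0, X_dvd_iff]
    push_neg
    refine ⟨single 1 (k - 1), by simp [Finsupp.single_apply], ?_⟩
    rw [hf, map_add]
    have h1 : coeff (single (1:Fin 2) (k-1)) (X0 ^ 2 * X1) = 0 := by
      refine X_pow_dvd_iff.mp (dvd_mul_right (X0 ^ 2) X1) _ ?_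
      simp [Finsupp.single_apply]
    have h2 : coeff (single (1:Fin 2) (k-1)) (X1 ^ (k-1)) = 1 := by
      rw [hX1, coeff_X_pow, if_pos rfl]
    rw [h1, h2]
    norm_num
  ext g
  rw [Ideal.mem_colon_span_singleton, Ideal.mem_span_singleton]
  constructor
  · intro hg
    have hspan : Ideal.span ({MvPowerSeries.C (σ := Fin 2) (R := ℂ) c1 * X0 ^ (m + 1),
        MvPowerSeries.C (σ := Fin 2) (R := ℂ) c2 * (X0 ^ m * X1)} : Set (MvPowerSeries (Fin 2) ℂ)) ≤
        Ideal.span {X0 ^ m} := by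
      rw [Ideal.span_le]
      rintro p hp
      simp only [Set.mem_insert_iff, Set.mem_singleton_iff] at hp
      rcases hp with rfl | rfl
      · rw [SetLike.mem_coe, Ideal.mem_span_singleton]
        exact ⟨MvPowerSeries.C (σ := Fin 2) (R := ℂ) c1 * X0, by ring⟩
      · rw [SetLike.mem_coe, Ideal.mem_span_singleton]
        exact ⟨MvPowerSeries.C (σ := Fin 2) (R := ℂ) c2 * X1, by ring⟩
    have hdvd : X0 ^ m ∣ g * f := Ideal.mem_span_singleton.mp (hspan hg)
    haveI : IsDomain (MvPowerSeries (Fin 2) ℂ) := NoZeroDivisors.to_isDomain _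
    exact X0_prime.pow_dvd_of_dvd_mul_right m hfd hdvd
  · rintro ⟨h, rfl⟩
    rw [Ideal.mem_span_pair]
    refine ⟨MvPowerSeries.C (σ := Fin 2) (R := ℂ) c1⁻¹ * (h * (X0 * X1)),
      MvPowerSeries.C (σ := Fin 2) (R := ℂ) c2⁻¹ * (h * X1 ^ (k - 2)), ?_⟩
    have e1 : MvPowerSeries.C (σ := Fin 2) (R := ℂ) c1⁻¹ * MvPowerSeries.C (σ := Fin 2) (R := ℂ) c1 = 1 := by
      rw [← map_mul, inv_mul_cancel₀ hc1, map_one]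
    have e2 : MvPowerSeries.C (σ := Fin 2) (R := ℂ) c2⁻¹ * MvPowerSeries.C (σ := Fin 2) (R := ℂ) c2 = 1 := by
      rw [← map_mul, inv_mul_cancel₀ hc2, map_one]
    have hkk : k - 1 = (k - 2) + 1 := by omega
    calc MvPowerSeries.C (σ := Fin 2) (R := ℂ) c1⁻¹ * (h * (X0 * X1)) *
          (MvPowerSeries.C (σ := Fin 2) (R := ℂ) c1 * X0 ^ (m + 1)) +
        MvPowerSeries.C (σ := Fin 2) (R := ℂ) c2⁻¹ * (h * X1 ^ (k - 2)) *
          (MvPowerSeries.C (σ := Fin 2) (R := ℂ) c2 * (X0 ^ m * X1))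
        = (MvPowerSeries.C (σ := Fin 2) (R := ℂ) c1⁻¹ * MvPowerSeries.C (σ := Fin 2) (R := ℂ) c1) *
            (h * X0 * X1 * X0 ^ (m + 1)) +
          (MvPowerSeries.C (σ := Fin 2) (R := ℂ) c2⁻¹ * MvPowerSeries.C (σ := Fin 2) (R := ℂ) c2) *
            (h * X1 ^ (k - 2) * (X0 ^ m * X1)) := by ring
      _ = X0 ^ m * h * f := by rw [e1, e2, hf, hkk]; ring
end
end

section
/- dim_ℂ ℂ[[x,y]]/(x^{m+1}, x²y + y^{k−1}) = (k−1)(m+1). -/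
open MvPowerSeries Finsupp Finset
noncomputable def dkNF (c m : ℕ) (i j : ℕ) : (ℕ × ℕ) →₀ ℂ :=
  if m < i then 0
  else if j ≤ c + 1 then Finsupp.single (i, j) 1
  else -dkNF c m (i + 2) (j - (c + 1))
termination_by j
decreasing_by omega

noncomputable def dkE (i j : ℕ) : Fin 2 →₀ ℕ :=
  Finsupp.single 0 i + Finsupp.single 1 j

noncomputable def dkPhi (c m N : ℕ) :
    MvPowerSeries (Fin 2) ℂ →ₗ[ℂ] ((ℕ × ℕ) →₀ ℂ) :=
  ∑ p ∈ Finset.range N ×ˢ Finset.range N,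
    (MvPowerSeries.coeff (dkE p.1 p.2)).smulRight (dkNF c m p.1 p.2)

lemma dkPhi_apply (c m N : ℕ) (g : MvPowerSeries (Fin 2) ℂ) :
    dkPhi c m N g = ∑ p ∈ Finset.range N ×ˢ Finset.range N,
      MvPowerSeries.coeff (dkE p.1 p.2) g • dkNF c m p.1 p.2 := by
  simp [dkPhi, LinearMap.sum_apply, LinearMap.smulRight_apply]

lemma dkE_le {s t i j : ℕ} : dkE s t ≤ dkE i j ↔ s ≤ i ∧ t ≤ j := by
  rw [Finsupp.le_def]
  constructor
  · intro h
    exact ⟨by simpa [dkE, Finsupp.single_apply] using h 0,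
      by simpa [dkE, Finsupp.single_apply] using h 1⟩
  · intro h u
    fin_cases u <;> simp [dkE, Finsupp.single_apply, h.1, h.2]

lemma dkE_sub (s t i j : ℕ) : dkE i j - dkE s t = dkE (i - s) (j - t) := by
  ext u; fin_cases u <;> simp [dkE, Finsupp.tsub_apply, Finsupp.single_apply]

lemma X_pow_mul_X_pow (i j : ℕ) :
    (MvPowerSeries.X 0 ^ i * MvPowerSeries.X 1 ^ j : MvPowerSeries (Fin 2) ℂ) =
      MvPowerSeries.monomial (dkE i j) 1 := by
  rw [MvPowerSeries.X_pow_eq, MvPowerSeries.X_pow_eq, MvPowerSeries.monomial_mul_monomial,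
    one_mul, dkE]

lemma dk_shift (c m N s t : ℕ) (u : MvPowerSeries (Fin 2) ℂ)
    (hbound : ∀ a b, a < N → b < N → N ≤ a + s ∨ N ≤ b + t → dkNF c m (a + s) (b + t) = 0) :
    dkPhi c m N (u * (MvPowerSeries.X 0 ^ s * MvPowerSeries.X 1 ^ t)) =
      ∑ p ∈ Finset.range N ×ˢ Finset.range N,
        MvPowerSeries.coeff (dkE p.1 p.2) u • dkNF c m (p.1 + s) (p.2 + t) := by
  rw [dkPhi_apply]
  have hterm : ∀ p : ℕ × ℕ,
      MvPowerSeries.coeff (dkE p.1 p.2)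
          (u * (MvPowerSeries.X 0 ^ s * MvPowerSeries.X 1 ^ t)) =
        if s ≤ p.1 ∧ t ≤ p.2 then MvPowerSeries.coeff (dkE (p.1 - s) (p.2 - t)) u else 0 := by
    intro p
    rw [X_pow_mul_X_pow, MvPowerSeries.coeff_mul_monomial]
    by_cases h : s ≤ p.1 ∧ t ≤ p.2
    · rw [if_pos (dkE_le.2 h), if_pos h, dkE_sub, mul_one]
    · rw [if_neg (fun hle => h (dkE_le.1 hle)), if_neg h]
  calc ∑ p ∈ Finset.range N ×ˢ Finset.range N,
        MvPowerSeries.coeff (dkE p.1 p.2)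
          (u * (MvPowerSeries.X 0 ^ s * MvPowerSeries.X 1 ^ t)) • dkNF c m p.1 p.2
      = ∑ p ∈ (Finset.range N ×ˢ Finset.range N).filter (fun p => s ≤ p.1 ∧ t ≤ p.2),
          MvPowerSeries.coeff (dkE (p.1 - s) (p.2 - t)) u • dkNF c m p.1 p.2 := by
        rw [Finset.sum_filter]
        refine Finset.sum_congr rfl fun p _ => ?_
        rw [hterm]
        split_ifs <;> simp
    _ = ∑ p ∈ (Finset.range N ×ˢ Finset.range N).filter
          (fun p => p.1 + s < N ∧ p.2 + t < N),
          MvPowerSeries.coeff (dkE p.1 p.2) u • dkNF c m (p.1 + s) (p.2 + t) := by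
        refine Finset.sum_nbij' (fun p => (p.1 - s, p.2 - t)) (fun p => (p.1 + s, p.2 + t))
          ?_ ?_ ?_ ?_ ?_
        · intro p hp
          simp only [Finset.mem_filter, Finset.mem_product, Finset.mem_range] at hp ⊢
          omega
        · intro p hp
          simp only [Finset.mem_filter, Finset.mem_product, Finset.mem_range] at hp ⊢
          omega
        · intro p hp
          simp only [Finset.mem_filter, Finset.mem_product, Finset.mem_range] at hp
          ext <;> simp <;> omega
        · intro p hp
          simp only [Finset.mem_filter, Finset.mem_product, Finset.mem_range] at hp
          ext <;> simp <;> omega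
        · intro p hp
          simp only [Finset.mem_filter, Finset.mem_product, Finset.mem_range] at hp
          have h1 : p.1 - s + s = p.1 := by omega
          have h2 : p.2 - t + t = p.2 := by omega
          simp only [h1, h2]
    _ = ∑ p ∈ Finset.range N ×ˢ Finset.range N,
          MvPowerSeries.coeff (dkE p.1 p.2) u • dkNF c m (p.1 + s) (p.2 + t) := by
        refine Finset.sum_subset (Finset.filter_subset _ _) ?_
        intro p hp hnp
        simp only [Finset.mem_filter, Finset.mem_product, Finset.mem_range] at hp hnp
        rw [hbound p.1 p.2 hp.1 hp.2 (by omega), smul_zero]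

lemma dkNF_big (c m i j : ℕ) (h : m < i) : dkNF c m i j = 0 := by
  rw [dkNF]; simp [h]

lemma dkNF_rec (c m i j : ℕ) (h2 : ¬ j ≤ c + 1) :
    dkNF c m i j = -dkNF c m (i + 2) (j - (c + 1)) := by
  by_cases h : m < i
  · rw [dkNF_big c m i j h, dkNF_big c m (i+2) _ (by omega), neg_zero]
  · rw [dkNF]; simp [h, h2]

lemma dkNF_bigj (c m : ℕ) : ∀ t i j, m < i + 2 * t → t * (c + 1) < j → dkNF c m i j = 0 := by
  intro t
  induction t with
  | zero => intro i j h _; exact dkNF_big c m i j (by omega)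
  | succ t ih =>
    intro i j h hj
    have e : (t + 1) * (c + 1) = t * (c + 1) + (c + 1) := by ring
    rw [dkNF_rec c m i j (by omega), ih (i + 2) (j - (c + 1)) (by omega)
      (by omega), neg_zero]

lemma dkPhi_mul_g1 (c m N : ℕ) (hmN : m + 3 ≤ N) (u : MvPowerSeries (Fin 2) ℂ) :
    dkPhi c m N (u * MvPowerSeries.X 0 ^ (m + 1)) = 0 := by
  rw [dkPhi_apply]
  refine Finset.sum_eq_zero fun p _ => ?_
  by_cases h : m < p.1
  · rw [dkNF_big c m _ _ h, smul_zero]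
  · rw [MvPowerSeries.X_pow_dvd_iff.mp (dvd_mul_left _ u) (dkE p.1 p.2)
      (by simp [dkE, Finsupp.single_apply]; omega), zero_smul]

lemma dkPhi_mul_g2 (c m N : ℕ) (hmN : m + 3 ≤ N) (hN1 : (m + 1) * (c + 1) < N)
    (u : MvPowerSeries (Fin 2) ℂ) :
    dkPhi c m N (u * (MvPowerSeries.X 0 ^ 2 * MvPowerSeries.X 1 +
      MvPowerSeries.X 1 ^ (c + 2))) = 0 := by
  have h1 : (MvPowerSeries.X 0 ^ 2 * MvPowerSeries.X 1 : MvPowerSeries (Fin 2) ℂ) =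
      MvPowerSeries.X 0 ^ 2 * MvPowerSeries.X 1 ^ 1 := by ring
  have h2 : (MvPowerSeries.X 1 ^ (c + 2) : MvPowerSeries (Fin 2) ℂ) =
      MvPowerSeries.X 0 ^ 0 * MvPowerSeries.X 1 ^ (c + 2) := by ring
  rw [mul_add, map_add, h1, h2]
  rw [dk_shift c m N 2 1 u ?b1, dk_shift c m N 0 (c + 2) u ?b2]
  case b1 =>
    intro a b ha hb hor
    rcases hor with h | h
    · exact dkNF_big c m _ _ (by omega)
    · exact dkNF_bigj c m (m + 1) _ _ (by omega) (by linarith)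
  case b2 =>
    intro a b ha hb hor
    rcases hor with h | h
    · omega
    · exact dkNF_bigj c m (m + 1) _ _ (by omega) (by linarith)
  rw [← Finset.sum_add_distrib]
  refine Finset.sum_eq_zero fun p _ => ?_
  rw [← smul_add]
  have : dkNF c m (p.1 + 0) (p.2 + (c + 2)) = -dkNF c m (p.1 + 2) (p.2 + 1) := by
    rw [dkNF_rec c m _ _ (by omega)]
    congr 2 <;> omega
  rw [this, add_neg_cancel, smul_zero]

noncomputable def dkI (c m : ℕ) : Ideal (MvPowerSeries (Fin 2) ℂ) :=
  Ideal.span {MvPowerSeries.X 0 ^ (m + 1),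
    MvPowerSeries.X 0 ^ 2 * MvPowerSeries.X 1 + MvPowerSeries.X 1 ^ (c + 2)}

lemma dkPhi_mem (c m N : ℕ) (hmN : m + 3 ≤ N) (hN1 : (m + 1) * (c + 1) < N)
    (u : MvPowerSeries (Fin 2) ℂ) (hu : u ∈ dkI c m) : dkPhi c m N u = 0 := by
  rw [dkI, Ideal.mem_span_pair] at hu
  obtain ⟨a, b, rfl⟩ := hu
  rw [map_add, dkPhi_mul_g1 c m N hmN a, dkPhi_mul_g2 c m N hmN hN1 b, add_zero]

lemma dkE_inj {i j a b : ℕ} (h : dkE i j = dkE a b) : i = a ∧ j = b := by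
  constructor
  · have := congrFun (congrArg (↑·) h) 0
    simpa [dkE, Finsupp.single_apply] using this
  · have := congrFun (congrArg (↑·) h) 1
    simpa [dkE, Finsupp.single_apply] using this

lemma dkPhi_monomial (c m N a b : ℕ) (ha : a < N) (hb : b < N) :
    dkPhi c m N (MvPowerSeries.X 0 ^ a * MvPowerSeries.X 1 ^ b) = dkNF c m a b := by
  rw [dkPhi_apply, X_pow_mul_X_pow]
  rw [Finset.sum_eq_single_of_mem (a, b)
    (by simp [Finset.mem_product, ha, hb])]
  · rw [MvPowerSeries.coeff_monomial_same, one_smul]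
  · intro q _ hq
    rw [MvPowerSeries.coeff_monomial, if_neg, zero_smul]
    intro hEq
    obtain ⟨h1, h2⟩ := dkE_inj hEq
    exact hq (Prod.ext h1 h2)

lemma dkE_eta (d : Fin 2 →₀ ℕ) : d = dkE (d 0) (d 1) := by
  ext s
  fin_cases s <;> simp [dkE, Finsupp.single_apply]

lemma dk_memI0 (c m i j : ℕ) (h : m + 1 ≤ i) :
    (MvPowerSeries.X 0 ^ i * MvPowerSeries.X 1 ^ j : MvPowerSeries (Fin 2) ℂ) ∈ dkI c m := by
  obtain ⟨i', rfl⟩ : ∃ i', i = (m + 1) + i' := ⟨i - (m + 1), by omega⟩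
  have : (MvPowerSeries.X 0 ^ (m + 1 + i') * MvPowerSeries.X 1 ^ j :
      MvPowerSeries (Fin 2) ℂ) =
      MvPowerSeries.X 0 ^ (m + 1) * (MvPowerSeries.X 0 ^ i' * MvPowerSeries.X 1 ^ j) := by
    ring
  rw [this]
  exact Ideal.mul_mem_right _ _ (Ideal.subset_span (Set.mem_insert _ _))

lemma dk_memI (c m : ℕ) : ∀ t i j, m + 1 ≤ i + 2 * t → t * (c + 1) < j →
    (MvPowerSeries.X 0 ^ i * MvPowerSeries.X 1 ^ j : MvPowerSeries (Fin 2) ℂ) ∈ dkI c m := by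
  intro t
  induction t with
  | zero => intro i j h _; exact dk_memI0 c m i j (by omega)
  | succ t ih =>
    intro i j h hj
    have e : (t + 1) * (c + 1) = t * (c + 1) + (c + 1) := by ring
    obtain ⟨j', rfl⟩ : ∃ j', j = j' + (c + 2) := ⟨j - (c + 2), by omega⟩
    have key : (MvPowerSeries.X 0 ^ i * MvPowerSeries.X 1 ^ (j' + (c + 2)) :
        MvPowerSeries (Fin 2) ℂ) =
        (MvPowerSeries.X 0 ^ i * MvPowerSeries.X 1 ^ j') *
          (MvPowerSeries.X 0 ^ 2 * MvPowerSeries.X 1 + MvPowerSeries.X 1 ^ (c + 2)) -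
        MvPowerSeries.X 0 ^ (i + 2) * MvPowerSeries.X 1 ^ (j' + 1) := by
      ring
    rw [key]
    exact sub_mem (Ideal.mul_mem_left _ _ (Ideal.subset_span (Set.mem_insert_of_mem _ rfl)))
      (ih (i + 2) (j' + 1) (by omega) (by omega))

lemma dk_trunc (c m N : ℕ) (hmN : m + 3 ≤ N) (hN1 : (m + 1) * (c + 1) < N)
    (u : MvPowerSeries (Fin 2) ℂ) :
    u - ∑ p ∈ Finset.range N ×ˢ Finset.range N,
        MvPowerSeries.coeff (dkE p.1 p.2) u •
          (MvPowerSeries.X 0 ^ p.1 * MvPowerSeries.X 1 ^ p.2) ∈ dkI c m := by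
  set P : MvPowerSeries (Fin 2) ℂ := ∑ p ∈ Finset.range N ×ˢ Finset.range N,
      MvPowerSeries.coeff (dkE p.1 p.2) u •
        (MvPowerSeries.X 0 ^ p.1 * MvPowerSeries.X 1 ^ p.2) with hPdef
  have hP : ∀ i j, i < N → j < N →
      MvPowerSeries.coeff (dkE i j) P = MvPowerSeries.coeff (dkE i j) u := by
    intro i j hi hj
    rw [hPdef, map_sum]
    rw [Finset.sum_eq_single_of_mem (i, j) (by simp [Finset.mem_product, hi, hj])]
    · rw [X_pow_mul_X_pow, map_smul, MvPowerSeries.coeff_monomial_same, smul_eq_mul, mul_one]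
    · intro q _ hq
      rw [X_pow_mul_X_pow, map_smul, MvPowerSeries.coeff_monomial, if_neg, smul_zero]
      intro hEq
      obtain ⟨h1, h2⟩ := dkE_inj hEq
      exact hq (Prod.ext h1.symm h2.symm)
  set T : MvPowerSeries (Fin 2) ℂ := u - P with hTdef
  set T1 : MvPowerSeries (Fin 2) ℂ :=
    (fun d => if m < d 0 then MvPowerSeries.coeff d T else 0) with hT1def
  have hcT1 : ∀ d : Fin 2 →₀ ℕ, MvPowerSeries.coeff d T1 =
      if m < d 0 then MvPowerSeries.coeff d T else 0 := fun d => rfl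
  have hT1mem : T1 ∈ dkI c m := by
    have hdvd : (MvPowerSeries.X 0 : MvPowerSeries (Fin 2) ℂ) ^ (m + 1) ∣ T1 := by
      rw [MvPowerSeries.X_pow_dvd_iff]
      intro d hd
      rw [hcT1, if_neg (by omega)]
    obtain ⟨w, hw⟩ := hdvd
    rw [hw]
    exact Ideal.mul_mem_right _ _ (Ideal.subset_span (Set.mem_insert _ _))
  have hT2mem : T - T1 ∈ dkI c m := by
    have hdvd : (MvPowerSeries.X 1 : MvPowerSeries (Fin 2) ℂ) ^ N ∣ T - T1 := by
      rw [MvPowerSeries.X_pow_dvd_iff]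
      intro d hd
      rw [map_sub, hcT1]
      by_cases h : m < d 0
      · rw [if_pos h, sub_self]
      · rw [if_neg h, sub_zero, hTdef, map_sub, dkE_eta d, hP (d 0) (d 1) (by omega) hd,
          sub_self]
    obtain ⟨w, hw⟩ := hdvd
    rw [hw]
    have hXN : (MvPowerSeries.X 1 : MvPowerSeries (Fin 2) ℂ) ^ N ∈ dkI c m := by
      have := dk_memI c m (m + 1) 0 N (by omega) (by omega)
      rwa [pow_zero, one_mul] at this
    exact Ideal.mul_mem_right _ _ hXN
  have : T = T1 + (T - T1) := by ring
  show T ∈ dkI c m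
  rw [this]
  exact add_mem hT1mem hT2mem

noncomputable def dkv (c m : ℕ) :
    Fin (m + 1) × Fin (c + 2) → (MvPowerSeries (Fin 2) ℂ ⧸ dkI c m) := fun p =>
  Ideal.Quotient.mk (dkI c m)
    (MvPowerSeries.X 0 ^ (p.1 : ℕ) * MvPowerSeries.X 1 ^ (p.2 : ℕ))

lemma dk_span_mono (c m : ℕ) : ∀ j i, Ideal.Quotient.mk (dkI c m)
    (MvPowerSeries.X 0 ^ i * MvPowerSeries.X 1 ^ j) ∈
      Submodule.span ℂ (Set.range (dkv c m)) := by
  intro j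
  induction j using Nat.strong_induction_on with
  | _ j ih =>
    intro i
    by_cases hi : m < i
    · rw [Ideal.Quotient.eq_zero_iff_mem.mpr (dk_memI0 c m i j (by omega))]
      exact zero_mem _
    · by_cases hj : j ≤ c + 1
      · exact Submodule.subset_span ⟨(⟨i, by omega⟩, ⟨j, by omega⟩), rfl⟩
      · obtain ⟨j', rfl⟩ : ∃ j', j = j' + (c + 2) := ⟨j - (c + 2), by omega⟩
        have key : (MvPowerSeries.X 0 ^ i * MvPowerSeries.X 1 ^ (j' + (c + 2)) :
            MvPowerSeries (Fin 2) ℂ) =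
            (MvPowerSeries.X 0 ^ i * MvPowerSeries.X 1 ^ j') *
              (MvPowerSeries.X 0 ^ 2 * MvPowerSeries.X 1 + MvPowerSeries.X 1 ^ (c + 2)) -
            MvPowerSeries.X 0 ^ (i + 2) * MvPowerSeries.X 1 ^ (j' + 1) := by
          ring
        have hg2 : (MvPowerSeries.X 0 ^ 2 * MvPowerSeries.X 1 +
            MvPowerSeries.X 1 ^ (c + 2) : MvPowerSeries (Fin 2) ℂ) ∈ dkI c m :=
          Ideal.subset_span (Set.mem_insert_of_mem _ rfl)
        rw [key, map_sub, Ideal.Quotient.eq_zero_iff_mem.mpr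
          (Ideal.mul_mem_left _ _ hg2), zero_sub]
        exact neg_mem (ih (j' + 1) (by omega) (i + 2))

lemma dk_span (c m N : ℕ) (hmN : m + 3 ≤ N) (hN1 : (m + 1) * (c + 1) < N) :
    Submodule.span ℂ (Set.range (dkv c m)) = ⊤ := by
  rw [Submodule.eq_top_iff']
  intro x
  obtain ⟨u, rfl⟩ := Ideal.Quotient.mk_surjective x
  have hu : u = (∑ p ∈ Finset.range N ×ˢ Finset.range N,
      MvPowerSeries.coeff (dkE p.1 p.2) u •
        (MvPowerSeries.X 0 ^ p.1 * MvPowerSeries.X 1 ^ p.2)) +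
      (u - ∑ p ∈ Finset.range N ×ˢ Finset.range N,
        MvPowerSeries.coeff (dkE p.1 p.2) u •
          (MvPowerSeries.X 0 ^ p.1 * MvPowerSeries.X 1 ^ p.2)) := by ring
  rw [hu, map_add, Ideal.Quotient.eq_zero_iff_mem.mpr (dk_trunc c m N hmN hN1 u), add_zero]
  have : Ideal.Quotient.mk (dkI c m) (∑ p ∈ Finset.range N ×ˢ Finset.range N,
      MvPowerSeries.coeff (dkE p.1 p.2) u •
        (MvPowerSeries.X 0 ^ p.1 * MvPowerSeries.X 1 ^ p.2)) =
      ∑ p ∈ Finset.range N ×ˢ Finset.range N,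
        MvPowerSeries.coeff (dkE p.1 p.2) u •
          Ideal.Quotient.mk (dkI c m)
            (MvPowerSeries.X 0 ^ p.1 * MvPowerSeries.X 1 ^ p.2) := by
    rw [← Ideal.Quotient.mkₐ_eq_mk ℂ (dkI c m)]
    rw [map_sum]
    exact Finset.sum_congr rfl fun p _ => map_smul _ _ _
  rw [this]
  exact Submodule.sum_mem _ fun p _ => Submodule.smul_mem _ _ (dk_span_mono c m p.2 p.1)

lemma dkNF_box (c m i j : ℕ) (h : ¬ m < i) (h2 : j ≤ c + 1) :
    dkNF c m i j = Finsupp.single (i, j) 1 := by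
  rw [dkNF]; simp [h, h2]

lemma dk_indep (c m N : ℕ) (hmN : m + 3 ≤ N) (hN1 : (m + 1) * (c + 1) < N)
    (hcN : c + 2 ≤ N) : LinearIndependent ℂ (dkv c m) := by
  rw [linearIndependent_iff']
  intro s g hsum i hi
  set W : MvPowerSeries (Fin 2) ℂ := ∑ p ∈ s, g p •
    (MvPowerSeries.X 0 ^ (p.1 : ℕ) * MvPowerSeries.X 1 ^ (p.2 : ℕ)) with hW
  have hWmem : W ∈ dkI c m := by
    rw [← Ideal.Quotient.eq_zero_iff_mem]
    have hmk : Ideal.Quotient.mk (dkI c m) W = ∑ p ∈ s, g p • dkv c m p := by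
      rw [← Ideal.Quotient.mkₐ_eq_mk ℂ (dkI c m), hW, map_sum]
      exact Finset.sum_congr rfl fun p _ => map_smul _ _ _
    rw [hmk, hsum]
  have hphi := dkPhi_mem c m N hmN hN1 W hWmem
  rw [hW, map_sum] at hphi
  have hterm : ∀ p : Fin (m + 1) × Fin (c + 2), p ∈ s →
      dkPhi c m N (g p • (MvPowerSeries.X 0 ^ (p.1 : ℕ) *
        MvPowerSeries.X 1 ^ (p.2 : ℕ))) =
      g p • Finsupp.single ((p.1 : ℕ), (p.2 : ℕ)) (1 : ℂ) := by
    intro p _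
    rw [map_smul, dkPhi_monomial c m N _ _ (by omega) (by omega),
      dkNF_box c m _ _ (by omega) (by omega)]
  rw [Finset.sum_congr rfl hterm] at hphi
  have := congrArg (fun F : (ℕ × ℕ) →₀ ℂ => F ((i.1 : ℕ), (i.2 : ℕ))) hphi
  simp only [Finsupp.finset_sum_apply, Finsupp.smul_apply, Finsupp.coe_zero,
    Pi.zero_apply] at this
  rw [Finset.sum_eq_single_of_mem i hi] at this
  · rwa [Finsupp.single_eq_same, smul_eq_mul, mul_one] at this
  · intro q _ hq
    rw [Finsupp.single_apply, if_neg, smul_zero]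
    intro hEq
    apply hq
    have h1 : (q.1 : ℕ) = (i.1 : ℕ) := congrArg Prod.fst hEq
    have h2 : (q.2 : ℕ) = (i.2 : ℕ) := congrArg Prod.snd hEq
    exact Prod.ext (Fin.ext h1) (Fin.ext h2)

lemma dk_main (c m : ℕ) :
    Module.finrank ℂ (MvPowerSeries (Fin 2) ℂ ⧸ dkI c m) = (c + 2) * (m + 1) := by
  have hmN : m + 3 ≤ (m + 2) * (c + 3) := by nlinarith
  have hN1 : (m + 1) * (c + 1) < (m + 2) * (c + 3) := by nlinarith
  have hcN : c + 2 ≤ (m + 2) * (c + 3) := by nlinarith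
  let b : Module.Basis (Fin (m + 1) × Fin (c + 2)) ℂ (MvPowerSeries (Fin 2) ℂ ⧸ dkI c m) :=
    Module.Basis.mk (dk_indep c m ((m + 2) * (c + 3)) hmN hN1 hcN)
      (dk_span c m ((m + 2) * (c + 3)) hmN hN1).ge
  rw [Module.finrank_eq_card_basis b, Fintype.card_prod, Fintype.card_fin, Fintype.card_fin]
  ring

/-- `dim_ℂ ℂ[[x,y]]/(x^{m+1}, x²y + y^{k−1}) = (k−1)(m+1)`. -/
theorem Dk_dim_X1_f (k m : ℕ) (hk : 4 ≤ k) (hm : 2 ≤ m) :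
    Module.finrank ℂ
      (MvPowerSeries (Fin 2) ℂ ⧸
        Ideal.span ({MvPowerSeries.X 0 ^ (m + 1),
          MvPowerSeries.X 0 ^ 2 * MvPowerSeries.X 1 + MvPowerSeries.X 1 ^ (k - 1)} :
          Set (MvPowerSeries (Fin 2) ℂ))) = (k - 1) * (m + 1) := by
  obtain ⟨c, rfl⟩ : ∃ c, k = c + 3 := ⟨k - 3, by omega⟩
  have h1 : c + 3 - 1 = c + 2 := by omega
  rw [h1]
  exact dk_main c m
end

section
/- dim_ℂ ℂ[[x,y]]/(x^{m+1}, x^m y, x²y + y^{k−1}) = m(k−1) + 1. -/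
open MvPowerSeries Finsupp
noncomputable section
namespace DkAux
abbrev R2 := MvPowerSeries (Fin 2) ℂ
def D (a b : ℕ) : Fin 2 →₀ ℕ := Finsupp.single 0 a + Finsupp.single 1 b
@[simp] lemma D_apply0 (a b : ℕ) : D a b 0 = a := by simp [D, Finsupp.single_apply]
@[simp] lemma D_apply1 (a b : ℕ) : D a b 1 = b := by simp [D, Finsupp.single_apply]
lemma eq_D (d : Fin 2 →₀ ℕ) : d = D (d 0) (d 1) := by
  ext i; fin_cases i <;> simp
lemma D_le_iff {a b : ℕ} {d : Fin 2 →₀ ℕ} : D a b ≤ d ↔ a ≤ d 0 ∧ b ≤ d 1 := by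
  rw [Finsupp.le_def, Fin.forall_fin_two]; simp
lemma sub_D (d : Fin 2 →₀ ℕ) (a b : ℕ) : d - D a b = D (d 0 - a) (d 1 - b) := by
  ext i; fin_cases i <;> simp [Finsupp.tsub_apply]
def mono (a b : ℕ) : R2 := MvPowerSeries.monomial (D a b) 1
lemma X_pow_mul_X_pow (a b : ℕ) : (X 0 : R2) ^ a * X 1 ^ b = mono a b := by
  rw [X_pow_eq, X_pow_eq, monomial_mul_monomial, one_mul]; rfl
lemma D_add (a b c e : ℕ) : D a b + D c e = D (a + c) (b + e) := by
  ext i : 1; fin_cases i <;> simp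
lemma mono_mul_mono (a b c e : ℕ) : mono a b * mono c e = mono (a + c) (b + e) := by
  rw [mono, mono, monomial_mul_monomial, one_mul, D_add, mono]
lemma coeff_mono (a b : ℕ) (d : Fin 2 →₀ ℕ) :
    coeff d (mono a b) = if d 0 = a ∧ d 1 = b then 1 else 0 := by
  rw [mono, coeff_monomial]
  congr 1
  · simp only [eq_iff_iff]
    constructor
    · rintro rfl; simp
    · rintro ⟨h1, h2⟩; rw [eq_D d, h1, h2]
lemma coeff_mono_mul (a b : ℕ) (g : R2) (d : Fin 2 →₀ ℕ) :
    coeff d (mono a b * g) =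
      if a ≤ d 0 ∧ b ≤ d 1 then coeff (D (d 0 - a) (d 1 - b)) g else 0 := by
  rw [mono, coeff_monomial_mul, sub_D]
  simp [D_le_iff]

lemma dec (f : R2) (n₁ n₂ : ℕ) :
    ∃ u v : R2, f = (∑ p ∈ Finset.range n₁ ×ˢ Finset.range n₂,
        (coeff (D p.1 p.2) f) • mono p.1 p.2) + mono n₁ 0 * u + mono 0 n₂ * v := by
  refine ⟨(fun d => coeff (D (d 0 + n₁) (d 1)) f : (Fin 2 →₀ ℕ) → ℂ),
    (fun d => if d 0 < n₁ then coeff (D (d 0) (d 1 + n₂)) f else 0 : (Fin 2 →₀ ℕ) → ℂ), ?_⟩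
  ext d
  rw [map_add, map_add, map_sum]
  have hsum : ∑ p ∈ Finset.range n₁ ×ˢ Finset.range n₂,
      coeff d ((coeff (D p.1 p.2) f) • mono p.1 p.2)
      = if d 0 < n₁ ∧ d 1 < n₂ then coeff d f else 0 := by
    have : ∀ p ∈ Finset.range n₁ ×ˢ Finset.range n₂,
        coeff d ((coeff (D p.1 p.2) f) • mono p.1 p.2)
        = if p = (d 0, d 1) then coeff (D p.1 p.2) f else 0 := by
      intro p _
      rw [MvPowerSeries.coeff_smul, coeff_mono]
      by_cases h : p = (d 0, d 1)
      · subst h; simp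
      · rw [if_neg h, mul_ite, mul_one, mul_zero, if_neg]
        intro hc; exact h (by ext <;> omega)
    rw [Finset.sum_congr rfl this, Finset.sum_ite_eq' (Finset.range n₁ ×ˢ Finset.range n₂)]
    simp only [Finset.mem_product, Finset.mem_range]
    by_cases h : d 0 < n₁ ∧ d 1 < n₂
    · rw [if_pos h, if_pos h, ← eq_D]
    · rw [if_neg h, if_neg h]
  rw [hsum]; erw [coeff_mono_mul, coeff_mono_mul]
  have hu : ∀ e : Fin 2 →₀ ℕ, coeff e
      ((fun d => coeff (D (d 0 + n₁) (d 1)) f : (Fin 2 →₀ ℕ) → ℂ) : R2)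
      = coeff (D (e 0 + n₁) (e 1)) f := fun e => rfl
  have hv : ∀ e : Fin 2 →₀ ℕ, coeff e
      ((fun d => if d 0 < n₁ then coeff (D (d 0) (d 1 + n₂)) f else 0 : (Fin 2 →₀ ℕ) → ℂ) : R2)
      = if e 0 < n₁ then coeff (D (e 0) (e 1 + n₂)) f else 0 := fun e => rfl
  rw [hu, hv]
  simp only [D_apply0, D_apply1, Nat.le_zero, zero_le, true_and, Nat.sub_zero, and_true]
  rcases lt_or_ge (d 0) n₁ with h1 | h1 <;> rcases lt_or_ge (d 1) n₂ with h2 | h2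
  · rw [if_pos ⟨h1, h2⟩, if_neg (by omega), if_neg (by omega)]; ring
  · rw [if_neg (by omega), if_neg (by omega), if_pos h2, if_pos h1,
      Nat.sub_add_cancel h2, ← eq_D]; ring
  · rw [if_neg (by omega), if_pos h1, if_neg (by omega), Nat.sub_add_cancel h1, ← eq_D]; ring
  · rw [if_neg (by omega), if_pos h1, if_pos h2, if_neg (by omega),
      Nat.sub_add_cancel h1, ← eq_D]; ring


def Ig (K m : ℕ) : Ideal R2 := Ideal.span {mono (m+1) 0, mono m 1, mono 2 1 + mono 0 (K+1)}

def Bset (K m : ℕ) : Finset (ℕ × ℕ) := insert (m, 0) (Finset.range m ×ˢ Finset.range (K+1))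

lemma card_Bset (K m : ℕ) : (Bset K m).card = m * (K+1) + 1 := by
  rw [Bset, Finset.card_insert_of_notMem (by simp), Finset.card_product, Finset.card_range,
    Finset.card_range]

lemma mem_Bset {K m a b : ℕ} :
    (a, b) ∈ Bset K m ↔ (a = m ∧ b = 0) ∨ (a < m ∧ b < K + 1) := by
  simp [Bset, Finset.mem_insert, Finset.mem_product, Prod.ext_iff]

def SP (K m : ℕ) : Submodule ℂ R2 :=
  (Submodule.span ℂ ((Ideal.Quotient.mk (Ig K m)) ''
      ((fun p : ℕ × ℕ => mono p.1 p.2) '' (Bset K m)))).comap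
    (Ideal.Quotient.mkₐ ℂ (Ig K m)).toLinearMap

lemma Ig_le_SP {K m : ℕ} {f : R2} (hf : f ∈ Ig K m) : f ∈ SP K m := by
  rw [SP, Submodule.mem_comap]
  have : (Ideal.Quotient.mkₐ ℂ (Ig K m)).toLinearMap f = 0 :=
    (Ideal.Quotient.eq_zero_iff_mem).2 hf
  rw [this]; exact Submodule.zero_mem _

lemma mono_mem_SP {K m : ℕ} (a b : ℕ) (hp : (a, b) ∈ Bset K m) : mono a b ∈ SP K m := by
  rw [SP, Submodule.mem_comap]
  exact Submodule.subset_span ⟨mono a b, ⟨(a, b), hp, rfl⟩, rfl⟩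

lemma g1_mem {K m : ℕ} : mono (m+1) 0 ∈ Ig K m := Ideal.subset_span (by simp)
lemma g2_mem {K m : ℕ} : mono m 1 ∈ Ig K m := Ideal.subset_span (by simp)
lemma g3_mem {K m : ℕ} : mono 2 1 + mono 0 (K+1) ∈ Ig K m := Ideal.subset_span (by simp)

lemma mono_factor {a b c e : ℕ} (h1 : c ≤ a) (h2 : e ≤ b) :
    mono a b = mono c e * mono (a-c) (b-e) := by
  rw [mono_mul_mono, Nat.add_sub_cancel' h1, Nat.add_sub_cancel' h2]

lemma g1_dvd {K m : ℕ} (a b : ℕ) (ha : m + 1 ≤ a) : mono a b ∈ Ig K m := by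
  rw [mono_factor ha (Nat.zero_le b)]
  exact Ideal.mul_mem_right _ _ g1_mem

lemma g2_dvd {K m : ℕ} (a b : ℕ) (ha : m ≤ a) (hb : 1 ≤ b) : mono a b ∈ Ig K m := by
  rw [mono_factor ha hb]
  exact Ideal.mul_mem_right _ _ g2_mem

lemma g1_mul {K m : ℕ} (a b : ℕ) (g : R2) (ha : m + 1 ≤ a) : mono a b * g ∈ Ig K m := by
  rw [mono_factor ha (Nat.zero_le b), mul_assoc]
  exact Ideal.mul_mem_right _ _ g1_mem

lemma g2_mul {K m : ℕ} (a b : ℕ) (g : R2) (ha : m ≤ a) (hb : 1 ≤ b) : mono a b * g ∈ Ig K m := by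
  rw [mono_factor ha hb, mul_assoc]
  exact Ideal.mul_mem_right _ _ g2_mem

lemma key_id (t K : ℕ) (v : R2) :
    mono (2*t) 1 * (mono 0 K * v)
      = (mono 2 1 + mono 0 (K+1)) * (mono (2*t) 0 * v) - mono (2*(t+1)) 1 * v := by
  have h1 : mono (2*t) 1 * mono 0 K = mono (2*t) (1+K) := by
    rw [mono_mul_mono, Nat.add_zero]
  have h2 : mono 2 1 * mono (2*t) 0 = mono (2*(t+1)) 1 := by
    rw [mono_mul_mono, Nat.add_zero, show 2+2*t = 2*(t+1) from by ring]
  have h3 : mono 0 (K+1) * mono (2*t) 0 = mono (2*t) (1+K) := by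
    rw [mono_mul_mono, Nat.add_zero, Nat.zero_add, show K+1 = 1+K from by ring]
  calc mono (2*t) 1 * (mono 0 K * v) = (mono (2*t) 1 * mono 0 K) * v := by
        rw [mul_assoc]
    _ = (mono 2 1 + mono 0 (K+1)) * (mono (2*t) 0 * v) - mono (2*(t+1)) 1 * v := by
        rw [h1, add_mul, ← mul_assoc, ← mul_assoc, h2, h3]; ring

lemma Q_SP {K m : ℕ} (hK : 2 ≤ K) :
    ∀ s t : ℕ, m ≤ 2*t + 2*s → ∀ g : R2, mono (2*t) 1 * g ∈ SP K m := by
  intro s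
  induction s with
  | zero =>
    intro t ht g
    exact Ig_le_SP (g2_mul (2*t) 1 g (by omega) le_rfl)
  | succ s ih =>
    intro t ht g
    rcases le_or_gt m (2*t) with h | h
    · exact Ig_le_SP (g2_mul (2*t) 1 g h le_rfl)
    obtain ⟨u, v, huv⟩ := dec g m K
    rw [huv, mul_add, mul_add, Finset.mul_sum]
    refine Submodule.add_mem _ (Submodule.add_mem _ (Submodule.sum_mem _ ?_) ?_) ?_
    · intro p hp
      simp only [Finset.mem_product, Finset.mem_range] at hp
      rw [mul_smul_comm, mono_mul_mono]
      refine Submodule.smul_mem _ _ ?_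
      rcases le_or_gt m (2*t + p.1) with hc | hc
      · exact Ig_le_SP (g2_dvd (2*t+p.1) (1+p.2) hc (by omega))
      · exact mono_mem_SP _ _ (mem_Bset.2 (Or.inr ⟨hc, by omega⟩))
    · rw [← mul_assoc, mono_mul_mono]
      exact Ig_le_SP (g2_mul (2*t+m) (1+0) u (by omega) (by omega))
    · rw [key_id]
      exact Submodule.sub_mem _
        (Ig_le_SP (Ideal.mul_mem_right _ _ g3_mem))
        (ih (t+1) (by omega) v)

lemma top_SP {K m : ℕ} (hK : 2 ≤ K) (hm : 2 ≤ m) (f : R2) : f ∈ SP K m := by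
  obtain ⟨u, v, huv⟩ := dec f (m+1) (K+1)
  rw [huv]
  refine Submodule.add_mem _ (Submodule.add_mem _ (Submodule.sum_mem _ ?_) ?_) ?_
  · intro p hp
    simp only [Finset.mem_product, Finset.mem_range] at hp
    refine Submodule.smul_mem _ _ ?_
    rcases lt_or_ge p.1 m with hc | hc
    · exact mono_mem_SP p.1 p.2 (mem_Bset.2 (Or.inr ⟨hc, hp.2⟩))
    · have hpm : p.1 = m := by omega
      rcases Nat.eq_zero_or_pos p.2 with h0 | h0
      · exact mono_mem_SP p.1 p.2 (mem_Bset.2 (Or.inl ⟨hpm, h0⟩))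
      · exact Ig_le_SP (g2_dvd p.1 p.2 hc h0)
  · exact Ig_le_SP (g1_mul (m+1) 0 u le_rfl)
  · have key : mono 0 (K+1) * v = (mono 2 1 + mono 0 (K+1)) * v - mono (2*1) 1 * v := by
      rw [add_mul, show (2*1 : ℕ) = 2 from by norm_num]; ring
    rw [key]
    exact Submodule.sub_mem _
      (Ig_le_SP (Ideal.mul_mem_right _ _ g3_mem))
      (Q_SP hK m 1 (by omega) v)


def L (K : ℕ) (p : ℕ × ℕ) : R2 →ₗ[ℂ] ℂ :=
  if p.2 = 0 then MvPowerSeries.coeff (D p.1 0)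
  else ∑ s ∈ Finset.range (p.1/2+1),
    ((-1:ℂ)^s) • MvPowerSeries.coeff (D (p.1-2*s) (p.2+s*K))

lemma L_apply_zero (K a : ℕ) (f : R2) : L K (a, 0) f = coeff (D a 0) f := by
  simp [L]

lemma L_apply_pos (K a b : ℕ) (hb : b ≠ 0) (f : R2) :
    L K (a, b) f = ∑ s ∈ Finset.range (a/2+1),
      ((-1:ℂ)^s) * coeff (D (a-2*s) (b+s*K)) f := by
  simp [L, hb, LinearMap.sum_apply, LinearMap.smul_apply, smul_eq_mul]

lemma L_g1 {K m : ℕ} (p : ℕ × ℕ) (ha : p.1 ≤ m) (g : R2) :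
    L K p (mono (m+1) 0 * g) = 0 := by
  obtain ⟨a, b⟩ := p
  simp only at ha
  rcases eq_or_ne b 0 with rfl | hb
  · rw [L_apply_zero, coeff_mono_mul, if_neg]
    simp only [D_apply0, D_apply1, not_and]
    intro h; omega
  · rw [L_apply_pos K a b hb]
    refine Finset.sum_eq_zero fun s hs => ?_
    rw [coeff_mono_mul, if_neg, mul_zero]
    simp only [D_apply0, D_apply1, not_and]
    intro h; omega

lemma L_g2 {K m : ℕ} (p : ℕ × ℕ) (hp : p ∈ Bset K m) (g : R2) :
    L K p (mono m 1 * g) = 0 := by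
  obtain ⟨a, b⟩ := p
  rcases eq_or_ne b 0 with rfl | hb
  · rw [L_apply_zero, coeff_mono_mul, if_neg]
    simp only [D_apply0, D_apply1, not_and]
    omega
  · have ha : a < m := by
      rcases mem_Bset.1 hp with h | h
      · exact absurd h.2 hb
      · exact h.1
    rw [L_apply_pos K a b hb]
    refine Finset.sum_eq_zero fun s hs => ?_
    rw [coeff_mono_mul, if_neg, mul_zero]
    simp only [D_apply0, D_apply1, not_and]
    intro h; omega

lemma L_g3 {K : ℕ} (p : ℕ × ℕ) (hK : 2 ≤ K) (hb : p.2 ≤ K) (g : R2) :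
    L K p ((mono 2 1 + mono 0 (K+1)) * g) = 0 := by
  obtain ⟨a, b⟩ := p
  simp only at hb
  rcases eq_or_ne b 0 with rfl | hb0
  · rw [L_apply_zero, add_mul, map_add, coeff_mono_mul, coeff_mono_mul,
      if_neg (by simp), if_neg (by simp), add_zero]
  · have expandA : (∑ s ∈ Finset.range (a/2+1), ((-1:ℂ)^s) *
            coeff (D (a-2*s) (b+s*K)) (mono 2 1 * g))
        = ∑ s ∈ Finset.range (a/2+1), ((-1:ℂ)^s) *
            (if 2 ≤ a-2*s ∧ 1 ≤ b+s*K then coeff (D (a-2*s-2) (b+s*K-1)) g else 0) := by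
      refine Finset.sum_congr rfl fun s _ => ?_
      rw [coeff_mono_mul]
      simp only [D_apply0, D_apply1]
    have expandC : (∑ s ∈ Finset.range (a/2+1), ((-1:ℂ)^s) *
            coeff (D (a-2*s) (b+s*K)) (mono 0 (K+1) * g))
        = ∑ s ∈ Finset.range (a/2+1), ((-1:ℂ)^s) *
            (if K+1 ≤ b+s*K then coeff (D (a-2*s) (b+s*K-(K+1))) g else 0) := by
      refine Finset.sum_congr rfl fun s _ => ?_
      rw [coeff_mono_mul]
      simp only [D_apply0, D_apply1, Nat.zero_le, true_and, Nat.sub_zero]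
    have hkey : ∀ s, s < a/2 →
        (if K+1 ≤ b+(s+1)*K then coeff (D (a-2*(s+1)) (b+(s+1)*K-(K+1))) g else 0)
        = (if 2 ≤ a-2*s ∧ 1 ≤ b+s*K then coeff (D (a-2*s-2) (b+s*K-1)) g else 0) := by
      intro s hs
      have h2 : 2 ≤ a - 2*s := by omega
      have hsK : b + (s+1)*K = b + s*K + K := by ring
      by_cases h1 : 1 ≤ b + s*K
      · rw [if_pos (by omega), if_pos ⟨h2, h1⟩]
        have e1 : a - 2*(s+1) = a - 2*s - 2 := by omega
        have e2 : b + (s+1)*K - (K+1) = b + s*K - 1 := by omega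
        rw [e1, e2]
      · rw [if_neg (by omega), if_neg (by tauto)]
    have hsum2 : (∑ s ∈ Finset.range (a/2+1), ((-1:ℂ)^s) *
            (if K+1 ≤ b+s*K then coeff (D (a-2*s) (b+s*K-(K+1))) g else 0))
        = - ∑ s ∈ Finset.range (a/2), ((-1:ℂ)^s) *
            (if 2 ≤ a-2*s ∧ 1 ≤ b+s*K then coeff (D (a-2*s-2) (b+s*K-1)) g else 0) := by
      rw [Finset.sum_range_succ']
      have e0 : ((-1:ℂ)^0) *
          (if K+1 ≤ b+0*K then coeff (D (a-2*0) (b+0*K-(K+1))) g else 0) = 0 := by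
        rw [if_neg (by omega), mul_zero]
      rw [e0, add_zero, ← Finset.sum_neg_distrib]
      refine Finset.sum_congr rfl fun s hs => ?_
      rw [hkey s (Finset.mem_range.1 hs), pow_succ]
      ring
    have hsum1 : (∑ s ∈ Finset.range (a/2+1), ((-1:ℂ)^s) *
            (if 2 ≤ a-2*s ∧ 1 ≤ b+s*K then coeff (D (a-2*s-2) (b+s*K-1)) g else 0))
        = ∑ s ∈ Finset.range (a/2), ((-1:ℂ)^s) *
            (if 2 ≤ a-2*s ∧ 1 ≤ b+s*K then coeff (D (a-2*s-2) (b+s*K-1)) g else 0) := by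
      rw [Finset.sum_range_succ, if_neg (by omega), mul_zero, add_zero]
    rw [add_mul, map_add, L_apply_pos K a b hb0, L_apply_pos K a b hb0, expandA, expandC,
      hsum1, hsum2, add_neg_cancel]

lemma L_dual {K m : ℕ} (p q : ℕ × ℕ) (hp : p ∈ Bset K m)
    (hq : q ∈ Bset K m) : L K p (mono q.1 q.2) = if p = q then 1 else 0 := by
  obtain ⟨a, b⟩ := p
  obtain ⟨c, d⟩ := q
  simp only
  have hd : d ≤ K := by
    rcases mem_Bset.1 hq with h | h <;> omega
  rcases eq_or_ne b 0 with rfl | hb0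
  · rw [L_apply_zero, coeff_mono]
    simp only [D_apply0, D_apply1, Prod.mk.injEq]
  · rw [L_apply_pos K a b hb0]
    have h0 : ∀ s ∈ Finset.range (a/2+1), s ≠ 0 →
        ((-1:ℂ)^s) * coeff (D (a-2*s) (b+s*K)) (mono c d) = 0 := by
      intro s hs hs0
      rw [coeff_mono, if_neg, mul_zero]
      simp only [D_apply0, D_apply1, not_and]
      intro h
      have h1 : 1 ≤ s := Nat.one_le_iff_ne_zero.2 hs0
      have h2 : K ≤ s * K := Nat.le_mul_of_pos_left K (by omega)
      omega
    rw [Finset.sum_eq_single_of_mem 0 (Finset.mem_range.2 (by omega)) h0, coeff_mono]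
    simp only [pow_zero, one_mul, Nat.mul_zero, Nat.sub_zero, Nat.zero_mul, Nat.add_zero,
      D_apply0, D_apply1, Prod.mk.injEq]


lemma mem_Bset_le {K m : ℕ} {p : ℕ × ℕ} (hp : p ∈ Bset K m) : p.1 ≤ m ∧ p.2 ≤ K := by
  obtain ⟨a, b⟩ := p
  rcases mem_Bset.1 hp with h | h <;> constructor <;> simp only <;> omega

theorem main (K m : ℕ) (hK : 2 ≤ K) (hm : 2 ≤ m) :
    Module.finrank ℂ (R2 ⧸ Ig K m) = m * (K + 1) + 1 := by
  classical
  set ι := {p : ℕ × ℕ // p ∈ Bset K m} with hι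
  set v : ι → R2 ⧸ Ig K m := fun p => Ideal.Quotient.mk (Ig K m) (mono p.1.1 p.1.2) with hv
  have hset : (Ideal.Quotient.mk (Ig K m)) '' ((fun p : ℕ × ℕ => mono p.1 p.2) '' (Bset K m))
      = Set.range v := by
    ext x
    simp only [Set.mem_image, Set.mem_range, Finset.mem_coe]
    constructor
    · rintro ⟨y, ⟨p, hp, rfl⟩, rfl⟩; exact ⟨⟨p, hp⟩, rfl⟩
    · rintro ⟨⟨p, hp⟩, rfl⟩; exact ⟨mono p.1 p.2, ⟨p, hp, rfl⟩, rfl⟩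
  have hspan : ⊤ ≤ Submodule.span ℂ (Set.range v) := by
    rintro x -
    obtain ⟨f, rfl⟩ := Ideal.Quotient.mk_surjective x
    have h := top_SP hK hm f
    rw [SP, Submodule.mem_comap, hset] at h
    exact h
  have hind : LinearIndependent ℂ v := by
    rw [Fintype.linearIndependent_iff]
    intro g hg j
    have hmk : Ideal.Quotient.mk (Ig K m) (∑ i : ι, g i • mono i.1.1 i.1.2) = 0 := by
      have : (Ideal.Quotient.mkₐ ℂ (Ig K m)) (∑ i : ι, g i • mono i.1.1 i.1.2) = 0 := by
        rw [map_sum]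
        simp only [map_smul, Ideal.Quotient.mkₐ_eq_mk]
        exact hg
      rw [← Ideal.Quotient.mkₐ_eq_mk ℂ]
      exact this
    have hmem : (∑ i : ι, g i • mono i.1.1 i.1.2) ∈ Ig K m :=
      (Ideal.Quotient.eq_zero_iff_mem).1 hmk
    rw [Ig, Ideal.mem_span_insert] at hmem
    obtain ⟨A, z1, hz1, hEq⟩ := hmem
    rw [Ideal.mem_span_insert] at hz1
    obtain ⟨B, z2, hz2, hEq2⟩ := hz1
    rw [Ideal.mem_span_singleton'] at hz2
    obtain ⟨Cc, hCc⟩ := hz2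
    have hL : L K j.1 (∑ i : ι, g i • mono i.1.1 i.1.2) = g j := by
      rw [map_sum]
      have hterm : ∀ i : ι, L K j.1 (g i • mono i.1.1 i.1.2) = if j = i then g i else 0 := by
        intro i
        rw [map_smul, smul_eq_mul, L_dual j.1 (i.1.1, i.1.2) j.2 (by simpa using i.2)]
        by_cases h : j = i
        · rw [if_pos (by rw [h]), if_pos h, mul_one]
        · rw [if_neg, if_neg h, mul_zero]
          intro hh
          exact h (Subtype.ext (by rw [← Prod.mk.eta (p := j.1), hh]))
      rw [Finset.sum_congr rfl (fun i _ => hterm i)]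
      convert Fintype.sum_ite_eq j g
    have heq3 : (∑ i : ι, g i • mono i.1.1 i.1.2)
        = A * mono (m+1) 0 + (B * mono m 1 + Cc * (mono 2 1 + mono 0 (K+1))) := by
      rw [hEq, hEq2, ← hCc]
    rw [heq3, map_add, map_add, mul_comm A, mul_comm B, mul_comm Cc,
      L_g1 j.1 (mem_Bset_le j.2).1 A, L_g2 j.1 j.2 B,
      L_g3 j.1 hK (mem_Bset_le j.2).2 Cc] at hL
    simpa using hL.symm
  have b : Module.Basis ι ℂ (R2 ⧸ Ig K m) := Module.Basis.mk hind hspan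
  rw [Module.finrank_eq_card_basis b]
  have hc : Fintype.card ι = (Bset K m).card := Fintype.card_coe _
  rw [hc, card_Bset]

end DkAux

/-- `dim_ℂ ℂ[[x,y]]/(x^{m+1}, x^m y, x²y + y^{k−1}) = m(k−1) + 1`. -/
theorem Dk_dim_B_f (k m : ℕ) (hk : 4 ≤ k) (hm : 2 ≤ m) :
    Module.finrank ℂ
      (MvPowerSeries (Fin 2) ℂ ⧸
        Ideal.span ({MvPowerSeries.X 0 ^ (m + 1),
          MvPowerSeries.X 0 ^ m * MvPowerSeries.X 1,
          MvPowerSeries.X 0 ^ 2 * MvPowerSeries.X 1 + MvPowerSeries.X 1 ^ (k - 1)} :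
          Set (MvPowerSeries (Fin 2) ℂ))) = m * (k - 1) + 1 := by
  obtain ⟨K, hK, rfl⟩ : ∃ K, 2 ≤ K ∧ k = K + 2 := ⟨k - 2, by omega, by omega⟩
  have e1 : (MvPowerSeries.X 0 : DkAux.R2) ^ (m + 1) = DkAux.mono (m+1) 0 := by
    rw [← DkAux.X_pow_mul_X_pow (m+1) 0, pow_zero, mul_one]
  have e2 : (MvPowerSeries.X 0 : DkAux.R2) ^ m * MvPowerSeries.X 1 = DkAux.mono m 1 := by
    rw [← DkAux.X_pow_mul_X_pow m 1, pow_one]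
  have e3 : (MvPowerSeries.X 0 : DkAux.R2) ^ 2 * MvPowerSeries.X 1
      + MvPowerSeries.X 1 ^ (K + 2 - 1) = DkAux.mono 2 1 + DkAux.mono 0 (K+1) := by
    have h1 : (MvPowerSeries.X 0 : DkAux.R2) ^ 2 * MvPowerSeries.X 1 = DkAux.mono 2 1 := by
      rw [← DkAux.X_pow_mul_X_pow 2 1, pow_one]
    have h2 : (MvPowerSeries.X 1 : DkAux.R2) ^ (K + 2 - 1) = DkAux.mono 0 (K+1) := by
      rw [show K + 2 - 1 = K + 1 by omega, ← DkAux.X_pow_mul_X_pow 0 (K+1), pow_zero, one_mul]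
    rw [h1, h2]
  have hIg : Ideal.span ({MvPowerSeries.X 0 ^ (m + 1),
          MvPowerSeries.X 0 ^ m * MvPowerSeries.X 1,
          MvPowerSeries.X 0 ^ 2 * MvPowerSeries.X 1 + MvPowerSeries.X 1 ^ (K + 2 - 1)} :
          Set (MvPowerSeries (Fin 2) ℂ)) = DkAux.Ig K m := by
    rw [DkAux.Ig, e1, e2, e3]
  rw [hIg, show K + 2 - 1 = K + 1 by omega, DkAux.main K m hK hm]
end
end
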